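/- arXiv:1201.0143 — 13 statements merged into one kernel-verified Lean document; each statement's English description precedes it below -/
import Mathlib

section
/- Let a ∈ ℤ, b ∈ ℤ ∪ {+∞} with a < b, and let p be a density with support S_p = {a, a+1, …, b}. Let Z be a random variable with law p. Then for every function f : ℤ → ℝ such that f(a) = 0, x ↦ f(x)p(x) is bounded on S_p, the series Σ_{x ∈ S_p} |f(x+1)p(x+1) − f(x)p(x)| converges, and (in case b = +∞) f(x)p(x) → 0 as x → +∞, one has E[T1(f,p)(Z)] = Σ_{x ∈ S_p} (f(x+1)p(x+1) − f(x)p(x)) = 0. -/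
open MeasureTheory Filter

/-- The Stein operator `T1` associated with a density `p` with support `S`:
`T1(f,p)(x) = (f(x+1)p(x+1) - f(x)p(x))/p(x)` for `x ∈ S`, and `0` otherwise. -/
noncomputable def T1 (S : Set ℤ) (f p : ℤ → ℝ) : ℤ → ℝ :=
  S.indicator (fun x => (f (x + 1) * p (x + 1) - f x * p x) / p x)

lemma telescope_Icc (F : ℤ → ℝ) (a m : ℤ) (h : a ≤ m) :
    ∑ x ∈ Finset.Icc a m, (F (x+1) - F x) = F (m+1) - F a := by
  refine Int.le_induction
    (motive := fun m _ => ∑ x ∈ Finset.Icc a m, (F (x+1) - F x) = F (m+1) - F a) ?_ ?_ m h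
  · rw [Finset.Icc_self, Finset.sum_singleton]
  · intro n hn ih
    have : Finset.Icc a (n+1) = insert (n+1) (Finset.Icc a n) := by
      ext y; simp [Finset.mem_Icc]; omega
    rw [this, Finset.sum_insert (by simp), ih]; ring

theorem stmt_0
    (a : ℤ) (b : WithTop ℤ) (hab : (a : WithTop ℤ) < b)
    (S : Set ℤ) (hS : S = {x : ℤ | a ≤ x ∧ (x : WithTop ℤ) ≤ b})
    (p : ℤ → ℝ)
    (hpos : ∀ x ∈ S, 0 < p x) (hnull : ∀ x ∉ S, p x = 0)
    (hmass : ∑' x : S, p x = 1)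
    {Ω : Type*} [MeasurableSpace Ω] (μ : Measure Ω) [IsProbabilityMeasure μ]
    (Z : Ω → ℤ) (hZ : Measurable Z)
    (hlaw : ∀ x : ℤ, μ (Z ⁻¹' {x}) = ENNReal.ofReal (p x))
    (f : ℤ → ℝ)
    (hfa : f a = 0)
    (hbdd : ∃ M : ℝ, ∀ x ∈ S, |f x * p x| ≤ M)
    (hsummable : Summable
      (fun x : S => |f ((x : ℤ) + 1) * p ((x : ℤ) + 1) - f (x : ℤ) * p (x : ℤ)|))
    (hlim : b = ⊤ → Tendsto (fun x : ℤ => f x * p x) atTop (nhds 0)) :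
    (∫ ω, T1 S f p (Z ω) ∂μ)
        = (∑' x : S, (f ((x : ℤ) + 1) * p ((x : ℤ) + 1) - f (x : ℤ) * p (x : ℤ))) ∧
      (∑' x : S, (f ((x : ℤ) + 1) * p ((x : ℤ) + 1) - f (x : ℤ) * p (x : ℤ))) = 0 := by
  have hp0 : ∀ x, 0 ≤ p x := by
    intro x; by_cases hx : x ∈ S
    · exact (hpos x hx).le
    · rw [hnull x hx]
  set D : ℤ → ℝ := fun x => f (x+1) * p (x+1) - f x * p x with hDdef
  have hDS : (fun x : S => |f ((x : ℤ) + 1) * p ((x : ℤ) + 1) - f (x : ℤ) * p (x : ℤ)|)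
      = fun x : S => |D (x : ℤ)| := rfl
  rw [hDS] at hsummable
  have hgoal1 : (∑' x : S, (f ((x : ℤ) + 1) * p ((x : ℤ) + 1) - f (x : ℤ) * p (x : ℤ)))
      = ∑' x : S, D (x : ℤ) := rfl
  have hsum_ind : Summable (S.indicator fun x => |D x|) := by
    rw [← summable_subtype_iff_indicator]
    exact hsummable
  -- key pointwise identity
  have hkey : ∀ x, p x * T1 S f p x = S.indicator D x := by
    intro x; by_cases hx : x ∈ S
    · rw [T1, Set.indicator_of_mem hx, Set.indicator_of_mem hx, mul_comm,
        div_mul_cancel₀ _ (hpos x hx).ne']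
    · rw [T1, Set.indicator_of_notMem hx, Set.indicator_of_notMem hx, mul_zero]
  have hmap : ∀ x : ℤ, (μ.map Z) {x} = ENNReal.ofReal (p x) := by
    intro x; rw [Measure.map_apply hZ (measurableSet_singleton x)]; exact hlaw x
  have hmeas : Measurable (T1 S f p) := measurable_from_top
  have hintg : Integrable (T1 S f p) (μ.map Z) := by
    refine ⟨hmeas.aestronglyMeasurable, ?_⟩
    rw [hasFiniteIntegral_iff_norm, lintegral_countable']
    have hpt : ∀ x : ℤ, ENNReal.ofReal ‖T1 S f p x‖ * (μ.map Z) {x}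
        = ENNReal.ofReal (S.indicator (fun y => |D y|) x) := by
      intro x; rw [hmap]
      by_cases hx : x ∈ S
      · rw [Set.indicator_of_mem hx,
          show T1 S f p x = D x / p x from by rw [T1, Set.indicator_of_mem hx],
          ← ENNReal.ofReal_mul (norm_nonneg _)]
        congr 1
        rw [Real.norm_eq_abs, abs_div, abs_of_pos (hpos x hx),
          div_mul_cancel₀ _ (hpos x hx).ne']
      · rw [Set.indicator_of_notMem hx, hnull x hx,
          show T1 S f p x = 0 from Set.indicator_of_notMem hx _]
        simp
    calc ∑' x : ℤ, ENNReal.ofReal ‖T1 S f p x‖ * (μ.map Z) {x}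
        = ∑' x : ℤ, ENNReal.ofReal (S.indicator (fun y => |D y|) x) := tsum_congr hpt
      _ = ENNReal.ofReal (∑' x : ℤ, S.indicator (fun y => |D y|) x) :=
          (ENNReal.ofReal_tsum_of_nonneg
            (fun x => Set.indicator_nonneg (fun y _ => abs_nonneg _) x) hsum_ind).symm
      _ < ⊤ := ENNReal.ofReal_lt_top
  have h1 : (∫ ω, T1 S f p (Z ω) ∂μ) = ∑' x : S, D (x : ℤ) := by
    rw [← integral_map hZ.aemeasurable hmeas.aestronglyMeasurable,
      integral_countable' hintg, tsum_subtype S D]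
    refine tsum_congr fun x => ?_
    rw [measureReal_def, hmap, ENNReal.toReal_ofReal (hp0 x), smul_eq_mul, hkey]
  -- the telescoping sum is zero
  have hsum0 : (∑' x : S, D (x : ℤ)) = 0 := by
    rcases b with _ | m
    · -- b = ⊤
      have hS' : S = Set.Ici a := by
        rw [hS]; ext x; simp [Set.mem_Ici, le_top]; exact fun _ => le_top
      have htend : Tendsto (fun x : ℤ => f x * p x) atTop (nhds 0) := hlim rfl
      have hinj : Function.Injective (fun n : ℕ => a + (n : ℤ)) := by
        intro n m h
        simp only [] at h
        omega
      have hrange : Function.support (S.indicator D)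
          ⊆ Set.range (fun n : ℕ => a + (n : ℤ)) := by
        intro x hx
        have hxS : x ∈ S := by
          by_contra h
          exact hx (Set.indicator_of_notMem h D)
        rw [hS'] at hxS
        exact ⟨(x - a).toNat, by
          simp only []
          rw [Int.toNat_of_nonneg (by exact sub_nonneg.mpr hxS)]; ring⟩
      have hmemn : ∀ n : ℕ, a + (n : ℤ) ∈ S := by
        intro n; rw [hS']; exact le_add_of_nonneg_right (Int.natCast_nonneg n)
      have h2 : (∑' n : ℕ, S.indicator D (a + (n : ℤ))) = ∑' x : ℤ, S.indicator D x :=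
        hinj.tsum_eq hrange
      have h3 : (∑' n : ℕ, S.indicator D (a + (n : ℤ))) = ∑' n : ℕ, D (a + (n : ℤ)) :=
        tsum_congr fun n => Set.indicator_of_mem (hmemn n) D
      have hGabs : Summable (fun n : ℕ => |D (a + (n : ℤ))|) := by
        refine Summable.congr (hsum_ind.comp_injective hinj) fun n => ?_
        exact Set.indicator_of_mem (hmemn n) _
      have hGsum : Summable (fun n : ℕ => D (a + (n : ℤ))) := hGabs.of_abs
      set G : ℕ → ℝ := fun n => f (a + (n : ℤ)) * p (a + (n : ℤ)) with hGdef
      have htel : ∀ n : ℕ, ∑ i ∈ Finset.range n, D (a + (i : ℤ)) = G n - G 0 := by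
        intro n
        rw [← Finset.sum_range_sub G n]
        refine Finset.sum_congr rfl fun i _ => ?_
        simp only [hGdef, hDdef]
        push_cast
        ring_nf
      have hGtend : Tendsto G atTop (nhds 0) :=
        htend.comp (tendsto_atTop_add_const_left atTop a tendsto_natCast_atTop_atTop)
      have hG0 : G 0 = 0 := by simp [hGdef, hfa]
      have hG0tend : Tendsto (fun _ : ℕ => G 0) atTop (nhds 0) := by
        rw [hG0]; exact tendsto_const_nhds
      have hlim1 : Tendsto (fun n : ℕ => ∑ i ∈ Finset.range n, D (a + (i : ℤ))) atTop
          (nhds (0 - 0)) := by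
        simp only [htel]
        exact hGtend.sub hG0tend
      have hlim2 : Tendsto (fun n : ℕ => ∑ i ∈ Finset.range n, D (a + (i : ℤ))) atTop
          (nhds (∑' n : ℕ, D (a + (n : ℤ)))) := hGsum.hasSum.tendsto_sum_nat
      have hfin : (∑' n : ℕ, D (a + (n : ℤ))) = 0 - 0 := tendsto_nhds_unique hlim2 hlim1
      rw [tsum_subtype S D, ← h2, h3, hfin, sub_zero]
    · -- b = (m : ℤ)
      have ham : a ≤ m := (WithTop.coe_lt_coe.mp hab).le
      have hSfin : ∀ x : ℤ, x ∈ S ↔ x ∈ Finset.Icc a m := by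
        intro x
        rw [hS]
        simp only [Set.mem_setOf_eq, Finset.mem_Icc]
        constructor
        · rintro ⟨h1, h2⟩; exact ⟨h1, WithTop.coe_le_coe.mp h2⟩
        · rintro ⟨h1, h2⟩; exact ⟨h1, WithTop.coe_le_coe.mpr h2⟩
      rw [tsum_subtype S D,
        tsum_eq_sum (s := Finset.Icc a m)
          (f := fun x => S.indicator D x)
          (fun x hx => Set.indicator_of_notMem (fun hxS => hx ((hSfin x).1 hxS)) D)]
      have hsc : ∑ x ∈ Finset.Icc a m, S.indicator D x = ∑ x ∈ Finset.Icc a m, D x :=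
        Finset.sum_congr rfl fun x hx =>
          Set.indicator_of_mem ((hSfin x).2 hx) D
      rw [hsc, telescope_Icc (fun x => f x * p x) a m ham]
      have hm1 : p (m+1) = 0 := by
        apply hnull
        intro hmem
        have h4 := (hSfin (m+1)).1 hmem
        rw [Finset.mem_Icc] at h4
        omega
      rw [hm1, hfa]
      ring
  rw [hgoal1]
  exact ⟨h1, hsum0⟩
end

section
/- Let a ∈ ℤ, b ∈ ℤ ∪ {+∞} with a < b, and let p be a density with support S_p = {a, a+1, …, b}. Let X be a ℤ-valued random variable with P(X ∈ S_p) > 0. Suppose that E[T1(f,p)(X)] = 0 for every function f : ℤ → ℝ such that f(a) = 0, x ↦ f(x)p(x) is bounded on S_p, (in case b = +∞) f(x)p(x) → 0 as x → +∞, and T1(f,p)(X) is integrable. Then the conditional law of X given X ∈ S_p equals p: for all z ∈ ℤ, P(X ≤ z | X ∈ S_p) = Σ_{k ≤ z} p(k). -/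
open MeasureTheory Filter ProbabilityTheory

/-- auxiliary: sum over `Ico a (x+1)` splits off top term -/
lemma sum_Ico_succ_top_int (a x : ℤ) (h : a ≤ x) (f : ℤ → ℝ) :
    ∑ k ∈ Finset.Ico a (x+1), f k = ∑ k ∈ Finset.Ico a x, f k + f x := by
  have : Finset.Ico a (x+1) = insert x (Finset.Ico a x) := by
    ext k; simp [Finset.mem_Ico]; omega
  rw [this, Finset.sum_insert (by simp)]; ring

theorem stmt_1
    (a : ℤ) (b : WithTop ℤ) (hab : (a : WithTop ℤ) < b)
    (S : Set ℤ) (hS : S = {x : ℤ | a ≤ x ∧ (x : WithTop ℤ) ≤ b})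
    (p : ℤ → ℝ)
    (hpos : ∀ x ∈ S, 0 < p x) (hnull : ∀ x ∉ S, p x = 0)
    (hmass : ∑' x : S, p x = 1)
    {Ω : Type*} [MeasurableSpace Ω] (μ : Measure Ω) [IsProbabilityMeasure μ]
    (X : Ω → ℤ) (hX : Measurable X)
    (hposS : 0 < μ {ω | X ω ∈ S})
    (hstein : ∀ f : ℤ → ℝ,
      f a = 0 →
      (∃ M : ℝ, ∀ x ∈ S, |f x * p x| ≤ M) →
      (b = ⊤ → Tendsto (fun x : ℤ => f x * p x) atTop (nhds 0)) →
      Integrable (fun ω => T1 S f p (X ω)) μ →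
      (∫ ω, T1 S f p (X ω) ∂μ) = 0) :
    ∀ z : ℤ, (μ[|{ω | X ω ∈ S}]) {ω | X ω ≤ z}
      = ENNReal.ofReal (∑' k : {k : ℤ // k ≤ z}, p (k : ℤ)) := by
  intro z
  classical
  have hmem : ∀ x : ℤ, x ∈ S ↔ a ≤ x ∧ (x : WithTop ℤ) ≤ b := by
    intro x; rw [hS]; simp
  have hp0 : ∀ x, 0 ≤ p x := by
    intro x
    by_cases hx : x ∈ S
    · exact (hpos x hx).le
    · simp [hnull x hx]
  have hindS : S.indicator p = p := by
    funext x
    by_cases hx : x ∈ S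
    · simp [Set.indicator_of_mem hx]
    · simp [Set.indicator_of_notMem hx, hnull x hx]
  have hSummS : Summable (fun x : S => p x) := by
    by_contra h
    rw [tsum_eq_zero_of_not_summable h] at hmass
    norm_num at hmass
  have hSump : Summable p := by
    have := (summable_subtype_iff_indicator (s := S) (f := p)).mp hSummS
    rwa [hindS] at this
  have htsum_p : (∑' x, p x) = 1 := by
    rw [tsum_subtype S p, hindS] at hmass
    exact hmass
  -- the indicator of (-∞, z]
  set ind : ℤ → ℝ := fun k => if k ≤ z then 1 else 0 with hind_def
  set c : ℝ := ∑' k : {k : ℤ // k ≤ z}, p (k : ℤ) with hc_def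
  have hc_eq : c = ∑' k, p k * ind k := by
    rw [hc_def,
      show (∑' (k : {k : ℤ // k ≤ z}), p (k : ℤ)) = ∑' (x : ↥{k : ℤ | k ≤ z}), p (x : ℤ) from rfl,
      tsum_subtype {k : ℤ | k ≤ z} p]
    congr 1
    funext k
    by_cases hk : k ≤ z
    · simp [Set.indicator, hk, hind_def]
    · simp [Set.indicator, hk, hind_def]
  have hSumInd : Summable (fun k => p k * ind k) := by
    apply Summable.of_nonneg_of_le _ _ hSump
    · intro k; by_cases hk : k ≤ z <;> simp [hind_def, hk, hp0 k]
    · intro k; by_cases hk : k ≤ z <;> simp [hind_def, hk, hp0 k]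
  have hc0 : 0 ≤ c := by
    rw [hc_eq]
    apply tsum_nonneg
    intro k; by_cases hk : k ≤ z <;> simp [hind_def, hk, hp0 k]
  have hc1 : c ≤ 1 := by
    rw [hc_eq, ← htsum_p]
    apply Summable.tsum_le_tsum _ hSumInd hSump
    intro k; by_cases hk : k ≤ z <;> simp [hind_def, hk, hp0 k]
  -- the summand
  set q : ℤ → ℝ := fun k => p k * (ind k - c) with hq_def
  have hq_alt : q = fun k => p k * ind k - c * p k := by
    funext k; simp [hq_def]; ring
  have hSumq : Summable q := by
    rw [hq_alt]; exact hSumInd.sub (hSump.mul_left c)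
  have htsum_q : (∑' k, q k) = 0 := by
    rw [hq_alt, hSumInd.tsum_sub (hSump.mul_left c), tsum_mul_left, htsum_p, ← hc_eq]
    ring
  have hq0 : ∀ k ∉ S, q k = 0 := by
    intro k hk; simp [hq_def, hnull k hk]
  have habs : ∀ k, |ind k - c| ≤ 1 := by
    intro k
    rw [abs_le]
    by_cases hk : k ≤ z <;> simp [hind_def, hk] <;> constructor <;> linarith
  have hqabs : ∀ k, |q k| ≤ p k := by
    intro k
    rw [hq_def]
    calc |p k * (ind k - c)| = p k * |ind k - c| := by
          rw [abs_mul, abs_of_nonneg (hp0 k)]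
      _ ≤ p k * 1 := by
          exact mul_le_mul_of_nonneg_left (habs k) (hp0 k)
      _ = p k := by ring
  -- the test function
  set g : ℤ → ℝ := fun x => ∑ k ∈ Finset.Ico a x, q k with hg_def
  set f : ℤ → ℝ := fun x => g x / p x with hf_def
  have hfp : ∀ x ∈ S, f x * p x = g x := by
    intro x hx
    simp only [hf_def]
    exact div_mul_cancel₀ _ (hpos x hx).ne'
  have hgbd : ∀ x, |g x| ≤ 1 := by
    intro x
    calc |g x| ≤ ∑ k ∈ Finset.Ico a x, |q k| := Finset.abs_sum_le_sum_abs _ _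
      _ ≤ ∑ k ∈ Finset.Ico a x, p k := Finset.sum_le_sum (fun k _ => hqabs k)
      _ ≤ ∑' k, p k := Summable.sum_le_tsum _ (fun k _ => hp0 k) hSump
      _ = 1 := htsum_p
  -- key: numerator is q x on S
  have hgsucc : ∀ x ∈ S, f (x+1) * p (x+1) = g (x+1) := by
    intro x hx
    by_cases hx1 : (x+1) ∈ S
    · exact hfp _ hx1
    · have hp1 : p (x+1) = 0 := hnull _ hx1
      have hax : a ≤ x := ((hmem x).mp hx).1
      have hg1 : g (x+1) = 0 := by
        have hz : ∀ k ∉ Finset.Ico a (x+1), q k = 0 := by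
          intro k hk
          rw [Finset.mem_Ico] at hk
          push_neg at hk
          by_cases hka : a ≤ k
          · -- then k ≥ x+1, show k ∉ S
            have hkx : x + 1 ≤ k := hk hka
            apply hq0
            intro hkS
            have hb1 : ¬ ((x+1 : ℤ) : WithTop ℤ) ≤ b := by
              intro hle
              exact hx1 ((hmem (x+1)).mpr ⟨by linarith, hle⟩)
            have hkb : ((k : ℤ) : WithTop ℤ) ≤ b := ((hmem k).mp hkS).2
            exact hb1 (le_trans (by exact_mod_cast hkx) hkb)
          · exact hq0 k (fun hkS => hka ((hmem k).mp hkS).1)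
        have : (∑' k, q k) = ∑ k ∈ Finset.Ico a (x+1), q k := tsum_eq_sum hz
        rw [hg_def]
        simp only
        rw [← this, htsum_q]
      simp [hp1, hg1]
  have hkey : ∀ x ∈ S, f (x+1) * p (x+1) - f x * p x = q x := by
    intro x hx
    have hax : a ≤ x := ((hmem x).mp hx).1
    rw [hgsucc x hx, hfp x hx, hg_def]
    simp only
    rw [sum_Ico_succ_top_int a x hax]
    ring
  -- identify T1
  set φ : ℤ → ℝ := S.indicator (fun x => ind x - c) with hφ_def
  have hT1 : T1 S f p = φ := by
    funext x
    by_cases hx : x ∈ S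
    · rw [T1, Set.indicator_of_mem hx, hφ_def, Set.indicator_of_mem hx, hkey x hx, hq_def]
      exact mul_div_cancel_left₀ _ (hpos x hx).ne'
    · rw [T1, Set.indicator_of_notMem hx, hφ_def, Set.indicator_of_notMem hx]
  -- Stein hypotheses
  have h1 : f a = 0 := by simp [hf_def, hg_def]
  have h2 : ∃ M : ℝ, ∀ x ∈ S, |f x * p x| ≤ M := ⟨1, fun x hx => by rw [hfp x hx]; exact hgbd x⟩
  have h3 : b = ⊤ → Tendsto (fun x : ℤ => f x * p x) atTop (nhds 0) := by
    intro hb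
    have hSa : ∀ x : ℤ, a ≤ x → x ∈ S := fun x hx => (hmem x).mpr ⟨hx, hb ▸ le_top⟩
    -- partial sums over ℕ
    have hinj : Function.Injective (fun n : ℕ => a + (n : ℤ)) := by
      intro m n h; simpa using h
    have hsupp : Function.support q ⊆ Set.range (fun n : ℕ => a + (n : ℤ)) := by
      intro k hk
      have hkS : k ∈ S := by
        by_contra h; exact hk (hq0 k h)
      have hak : a ≤ k := ((hmem k).mp hkS).1
      exact ⟨(k - a).toNat, by simp; omega⟩
    have hsum_h : Summable (fun n : ℕ => q (a + n)) := by
      have := (hinj.summable_iff (f := q) ?_).mpr hSumq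
      · exact this
      · intro x hx
        by_contra h
        exact hx (hsupp h)
    have htsum_h : (∑' n : ℕ, q (a + n)) = 0 := by
      rw [hinj.tsum_eq hsupp, htsum_q]
    have hnat : ∀ n : ℕ, g (a + n) = ∑ i ∈ Finset.range n, q (a + i) := by
      intro n
      induction n with
      | zero => simp [hg_def]
      | succ n ih =>
        have hcast : (a + ((n : ℤ) + 1)) = (a + (n : ℤ)) + 1 := by ring
        rw [hg_def]
        simp only
        push_cast
        rw [hcast, sum_Ico_succ_top_int a (a + (n:ℤ)) (by linarith [Int.ofNat_nonneg n])]
        rw [hg_def] at ih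
        simp only at ih
        rw [ih, Finset.sum_range_succ]
    have htendN : Tendsto (fun n : ℕ => g (a + n)) atTop (nhds 0) := by
      have := hsum_h.hasSum.tendsto_sum_nat
      rw [htsum_h] at this
      exact this.congr (fun n => (hnat n).symm)
    have htoNat : Tendsto (fun x : ℤ => (x - a).toNat) atTop atTop := by
      apply tendsto_atTop_atTop.mpr
      intro n
      exact ⟨a + n, fun x hx => by omega⟩
    have htendg : Tendsto g atTop (nhds 0) := by
      apply (htendN.comp htoNat).congr'
      filter_upwards [eventually_ge_atTop a] with x hx
      have : a + (((x - a).toNat : ℕ) : ℤ) = x := by omega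
      simp only [Function.comp]
      rw [this]
    apply htendg.congr'
    filter_upwards [eventually_ge_atTop a] with x hx
    exact (hfp x (hSa x hx)).symm
  -- integrability
  have hSmeas : MeasurableSet S := trivial
  have hmeasφ : Measurable fun ω => φ (X ω) := (measurable_of_countable φ).comp hX
  have h4 : Integrable (fun ω => φ (X ω)) μ := by
    apply Integrable.mono' (integrable_const (2 : ℝ)) hmeasφ.aestronglyMeasurable
    filter_upwards with ω
    rw [Real.norm_eq_abs]
    by_cases h : X ω ∈ S
    · rw [hφ_def, Set.indicator_of_mem h]
      linarith [habs (X ω)]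
    · rw [hφ_def, Set.indicator_of_notMem h]
      norm_num
  -- apply Stein
  have h0 : (∫ ω, φ (X ω) ∂μ) = 0 := by
    rw [← hT1]
    exact hstein f h1 h2 h3 (by rw [hT1]; exact h4)
  -- compute the integral
  set A : Set Ω := X ⁻¹' S with hA_def
  set B : Set Ω := X ⁻¹' (S ∩ {x | x ≤ z}) with hB_def
  have hAmeas : MeasurableSet A := hX trivial
  have hBmeas : MeasurableSet B := hX trivial
  have hsplit : (fun ω => φ (X ω)) =
      fun ω => B.indicator (fun _ => (1:ℝ)) ω - c * A.indicator (fun _ => (1:ℝ)) ω := by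
    funext ω
    by_cases h : X ω ∈ S
    · have hA : ω ∈ A := h
      by_cases h2 : X ω ≤ z
      · have hB : ω ∈ B := ⟨h, h2⟩
        rw [hφ_def, Set.indicator_of_mem h, Set.indicator_of_mem hA, Set.indicator_of_mem hB]
        simp [hind_def, h2]
      · have hB : ω ∉ B := fun hB => h2 hB.2
        rw [hφ_def, Set.indicator_of_mem h, Set.indicator_of_mem hA, Set.indicator_of_notMem hB]
        simp [hind_def, h2]
    · have hA : ω ∉ A := h
      have hB : ω ∉ B := fun hB => h hB.1
      rw [hφ_def, Set.indicator_of_notMem h, Set.indicator_of_notMem hA,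
        Set.indicator_of_notMem hB]
      ring
  have hIB : Integrable (fun ω => B.indicator (fun _ => (1:ℝ)) ω) μ :=
    (integrable_const (1:ℝ)).indicator hBmeas
  have hIA : Integrable (fun ω => A.indicator (fun _ => (1:ℝ)) ω) μ :=
    (integrable_const (1:ℝ)).indicator hAmeas
  rw [hsplit] at h0
  rw [integral_sub hIB (hIA.const_mul c), integral_const_mul,
    integral_indicator_const (1:ℝ) hBmeas, integral_indicator_const (1:ℝ) hAmeas] at h0
  simp only [smul_eq_mul, mul_one] at h0
  -- h0 : (μ B).toReal - c * (μ A).toReal = 0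
  have hreal : (μ B).toReal = c * (μ A).toReal := by simp only [measureReal_def] at h0; linarith
  have hAne : μ A ≠ 0 := by
    have : {ω | X ω ∈ S} = A := rfl
    rw [← this]; exact hposS.ne'
  have hAtop : μ A ≠ ⊤ := measure_ne_top μ A
  have hBtop : μ B ≠ ⊤ := measure_ne_top μ B
  have hmuB : μ B = ENNReal.ofReal c * μ A := by
    rw [← ENNReal.ofReal_toReal hBtop, hreal, ENNReal.ofReal_mul hc0,
      ENNReal.ofReal_toReal hAtop]
  have hset : {ω | X ω ∈ S} = A := rfl
  have hset2 : A ∩ {ω | X ω ≤ z} = B := by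
    ext ω; constructor
    · rintro ⟨h1', h2'⟩; exact ⟨h1', h2'⟩
    · rintro ⟨h1', h2'⟩; exact ⟨h1', h2'⟩
  rw [hset, cond_apply hAmeas, hset2, hmuB, ← mul_assoc,
    mul_comm (μ A)⁻¹ (ENNReal.ofReal c), mul_assoc, ENNReal.inv_mul_cancel hAne hAtop, mul_one]
end

section
/- Let a ∈ ℤ, b ∈ ℤ ∪ {+∞} with a < b, and let p be a density with support S_p = {a, a+1, …, b}. For z ∈ ℤ set l_z(k) := (1_{k ≤ z} − P_p(≤z))·1_{S_p}(k), where P_p(≤z) := Σ_{k ≤ z} p(k), and define f_z^p(x) := (1/p(x)) Σ_{k=a}^{x−1} l_z(k) p(k) for x ∈ S_p (empty sums equal 0) and f_z^p(x) := 0 for x ∉ S_p. Then f_z^p(a) = 0, x ↦ f_z^p(x)p(x) is bounded on S_p and tends to 0 as x → +∞ when b = +∞, and f_z^p solves the Stein equation: T1(f_z^p, p)(x) = l_z(x) for every x ∈ ℤ. -/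
open Filter Classical

theorem stmt_2
    (a : ℤ) (b : WithTop ℤ) (hab : (a : WithTop ℤ) < b)
    (S : Set ℤ) (hS : S = {x : ℤ | a ≤ x ∧ (x : WithTop ℤ) ≤ b})
    (p : ℤ → ℝ)
    (hpos : ∀ x ∈ S, 0 < p x) (hnull : ∀ x ∉ S, p x = 0)
    (hmass : ∑' x : S, p x = 1)
    (z : ℤ)
    (Pz : ℝ) (hPz : Pz = ∑' k : {k : ℤ // k ≤ z}, p (k : ℤ))
    (lz : ℤ → ℝ)
    (hlz : lz = S.indicator (fun k => (if k ≤ z then (1 : ℝ) else 0) - Pz))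
    (fz : ℤ → ℝ)
    (hfz : ∀ x : ℤ, fz x =
      if x ∈ S then (1 / p x) * ∑ k ∈ Finset.Icc a (x - 1), lz k * p k else 0) :
    fz a = 0 ∧
    (∃ M : ℝ, ∀ x ∈ S, |fz x * p x| ≤ M) ∧
    (b = ⊤ → Tendsto (fun x : ℤ => fz x * p x) atTop (nhds 0)) ∧
    (∀ x : ℤ, T1 S fz p x = lz x) := by
  have haS : a ∈ S := by rw [hS]; exact ⟨le_refl a, le_of_lt hab⟩
  set q : ℤ → ℝ := fun k => lz k * p k with hq
  -- q vanishes off S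
  have hq0 : ∀ k ∉ S, q k = 0 := by
    intro k hk; simp [hq, hnull k hk]
  -- pointwise formula for q
  have hqeq : ∀ k, q k = {k : ℤ | k ≤ z}.indicator p k - Pz * p k := by
    intro k
    by_cases hk : k ∈ S
    · simp only [hq, hlz, Set.indicator_of_mem hk]
      by_cases hkz : k ≤ z <;>
        simp [hkz, Set.indicator_apply, sub_mul]
    · have := hnull k hk
      simp [hq, hlz, Set.indicator_of_notMem hk, this, Set.indicator_apply]
  -- summability of p on S, hence on ℤ
  have hsumS : Summable (fun x : S => p x) := by
    by_contra h
    rw [tsum_eq_zero_of_not_summable h] at hmass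
    norm_num at hmass
  have hpind : S.indicator p = p := by
    ext k; by_cases hk : k ∈ S
    · simp [Set.indicator_of_mem hk]
    · simp [Set.indicator_of_notMem hk, hnull k hk]
  have hsump : Summable p := by
    have := (summable_subtype_iff_indicator (s := S) (f := p)).mp hsumS
    rwa [hpind] at this
  have htsump : ∑' k, p k = 1 := by
    rw [← hmass, tsum_subtype, hpind]
  -- Pz as a tsum over ℤ
  have hPz' : Pz = ∑' k, {k : ℤ | k ≤ z}.indicator p k := by
    rw [hPz]; exact tsum_subtype {k : ℤ | k ≤ z} p
  -- summability of q and its total sum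
  have hsumind : Summable ({k : ℤ | k ≤ z}.indicator p) := hsump.indicator _
  have hsumq : Summable q := by
    have : Summable (fun k => {k : ℤ | k ≤ z}.indicator p k - Pz * p k) :=
      hsumind.sub (hsump.mul_left Pz)
    exact this.congr (fun k => (hqeq k).symm)
  have htsumq : ∑' k, q k = 0 := by
    calc ∑' k, q k = ∑' k, ({k : ℤ | k ≤ z}.indicator p k - Pz * p k) :=
          tsum_congr hqeq
      _ = (∑' k, {k : ℤ | k ≤ z}.indicator p k) - ∑' k, Pz * p k :=
          Summable.tsum_sub hsumind (hsump.mul_left Pz)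
      _ = Pz - Pz * 1 := by rw [← hPz', tsum_mul_left, htsump]
      _ = 0 := by ring
  -- the partial sum function
  set g : ℤ → ℝ := fun x => ∑ k ∈ Finset.Icc a (x - 1), q k with hg
  have hfg : ∀ x ∈ S, fz x * p x = g x := by
    intro x hx
    rw [hfz x, if_pos hx]
    have hpx := (hpos x hx).ne'
    field_simp
    rfl
  have hfa : fz a = 0 := by
    rw [hfz a, if_pos haS]
    have h0 : Finset.Icc a (a - 1) = ∅ := by
      apply Finset.Icc_eq_empty; omega
    rw [h0]
    simp
  -- bound
  have habs : Summable (fun k => |q k|) := hsumq.abs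
  have hbound : ∀ x ∈ S, |fz x * p x| ≤ ∑' k, |q k| := by
    intro x hx
    rw [hfg x hx]
    calc |g x| ≤ ∑ k ∈ Finset.Icc a (x - 1), |q k| := Finset.abs_sum_le_sum_abs _ _
      _ ≤ ∑' k, |q k| := Summable.sum_le_tsum _ (fun k _ => abs_nonneg _) habs
  -- Stein equation
  have hstein : ∀ x : ℤ, T1 S fz p x = lz x := by
    intro x
    by_cases hx : x ∈ S
    · have hpx := (hpos x hx).ne'
      have hgx : fz x * p x = g x := hfg x hx
      have hax : a ≤ x := by rw [hS] at hx; exact hx.1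
      have hIcc : Finset.Icc a x = insert x (Finset.Icc a (x - 1)) := by
        ext k
        simp only [Finset.mem_Icc, Finset.mem_insert]
        omega
      by_cases hx1 : (x + 1) ∈ S
      · have hgx1 : fz (x + 1) * p (x + 1) = g (x + 1) := hfg (x + 1) hx1
        have : g (x + 1) = g x + q x := by
          simp only [hg, add_sub_cancel_right]
          rw [hIcc, Finset.sum_insert (by simp)]
          ring
        rw [T1, Set.indicator_of_mem hx, hgx1, hgx, this]
        field_simp [hq]
        simp only [hq]; ring
      · -- x + 1 ∉ S : here b = x
        have hxb : (x : WithTop ℤ) = b := by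
          rw [hS] at hx hx1
          simp only [Set.mem_setOf_eq, not_and] at hx1
          have h1 : ¬ ((x + 1 : ℤ) : WithTop ℤ) ≤ b := hx1 (by omega)
          have h2 : (x : WithTop ℤ) ≤ b := hx.2
          have h3 : b < ((x + 1 : ℤ) : WithTop ℤ) := not_le.mp h1
          lift b to ℤ using (h3.trans_le le_top).ne with bv
          have h5 : bv < x + 1 := by exact_mod_cast h3
          have h6 : x ≤ bv := by exact_mod_cast h2
          exact_mod_cast (by omega : x = bv)
        have hSfin : ∀ k, k ∉ Finset.Icc a x → q k = 0 := by
          intro k hk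
          apply hq0
          rw [hS]
          simp only [Finset.mem_Icc, not_and, not_le] at hk
          intro hmem
          obtain ⟨hk1, hk2⟩ := hmem
          rw [← hxb] at hk2
          have : k ≤ x := by exact_mod_cast hk2
          omega
        have hsum0 : g x + q x = 0 := by
          have : ∑ k ∈ Finset.Icc a x, q k = ∑' k, q k :=
            (tsum_eq_sum hSfin).symm
          rw [htsumq] at this
          simp only [hg]
          rw [hIcc, Finset.sum_insert (by simp)] at this
          linarith
        have hp1 : p (x + 1) = 0 := hnull _ hx1
        have h8 : lz x = q x / p x := by
          simp only [hq]; field_simp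
        rw [T1, Set.indicator_of_mem hx, hp1, hgx, h8, mul_zero, zero_sub]
        have h7 : -g x = q x := by linarith
        rw [h7]
    · rw [T1, Set.indicator_of_notMem hx, hlz, Set.indicator_of_notMem hx]
  -- tendsto
  have htend : b = ⊤ → Tendsto (fun x : ℤ => fz x * p x) atTop (nhds 0) := by
    intro hb
    have hSall : ∀ x : ℤ, a ≤ x → x ∈ S := by
      intro x hx; rw [hS]; exact ⟨hx, hb ▸ le_top⟩
    -- reindex with ℕ
    have hinj : Function.Injective (fun n : ℕ => a + (n : ℤ)) := by
      intro m n h; simpa using h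
    have hqn0 : ∀ x ∉ Set.range (fun n : ℕ => a + (n : ℤ)), q x = 0 := by
      intro x hx
      apply hq0
      rw [hS]
      rintro ⟨h1, -⟩
      exact hx ⟨(x - a).toNat, by show a + ((x - a).toNat : ℤ) = x; omega⟩
    have hhs : HasSum (fun n : ℕ => q (a + n)) 0 := by
      refine (hinj.hasSum_iff hqn0).mpr ?_
      rw [← htsumq]
      exact hsumq.hasSum
    have h1 := hhs.tendsto_sum_nat
    have h2 : Tendsto (fun x : ℤ => (x - a).toNat) atTop atTop := by
      refine tendsto_atTop_atTop.mpr (fun N => ⟨a + N, fun x hx => by show N ≤ (x - a).toNat; omega⟩)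
    have h3 := h1.comp h2
    refine h3.congr' ?_
    filter_upwards [eventually_ge_atTop a] with x hx
    have himg : (Finset.range (x - a).toNat).image (fun i : ℕ => a + (i : ℤ)) =
        Finset.Icc a (x - 1) := by
      ext k
      simp only [Finset.mem_image, Finset.mem_range, Finset.mem_Icc]
      constructor
      · rintro ⟨i, hi, rfl⟩; omega
      · intro hk; exact ⟨(k - a).toNat, by omega, by omega⟩
    show _ = fz x * p x
    rw [hfg x (hSall x hx)]
    simp only [hg]
    rw [← himg, Finset.sum_image (by intro i _ j _ h; exact hinj h)]
    rfl
  exact ⟨hfa, ⟨∑' k, |q k|, hbound⟩, htend, hstein⟩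
end

section
/- Let Θ ⊆ ℝ be open and θ ∈ Θ. Let a ∈ ℤ, b ∈ ℤ ∪ {+∞} with a < b, and let {p_η}_{η ∈ Θ} be a family of densities, each with the same support S_p = {a, a+1, …, b}, such that for each x ∈ S_p the map η ↦ p_η(x) is differentiable at θ. Set p := p_θ and p̃(x) := (d/dη)(p_η(x)/p_η(a))|_{η=θ} for x ∈ S_p, p̃(x) := 0 for x ∉ S_p (note p̃(a) = 0). Let Z be a random variable with law p. Then for every f : ℤ → ℝ such that x ↦ f(x)p̃(x) is bounded on S_p, Σ_{x ∈ S_p} |f(x+1)p̃(x+1) − f(x)p̃(x)| < ∞, and (in case b = +∞) f(x)p̃(x) → 0 as x → +∞, one has E[T2(f,p)(Z)] = 0. -/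
open MeasureTheory Filter

/-- The operator `T2` associated with a density `p` with support `S` and a function `p̃`:
`T2(f,p)(x) = (f(x+1)p̃(x+1) - f(x)p̃(x))/p(x)` for `x ∈ S`, and `0` otherwise. -/
noncomputable def T2 (S : Set ℤ) (f ptil p : ℤ → ℝ) : ℤ → ℝ :=
  S.indicator (fun x => (f (x + 1) * ptil (x + 1) - f x * ptil x) / p x)

theorem stmt_3
    (Θ : Set ℝ) (hΘ : IsOpen Θ) (θ : ℝ) (hθ : θ ∈ Θ)
    (a : ℤ) (b : WithTop ℤ) (hab : (a : WithTop ℤ) < b)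
    (S : Set ℤ) (hS : S = {x : ℤ | a ≤ x ∧ (x : WithTop ℤ) ≤ b})
    (P : ℝ → ℤ → ℝ)
    (hpos : ∀ η ∈ Θ, ∀ x ∈ S, 0 < P η x)
    (hnull : ∀ η ∈ Θ, ∀ x ∉ S, P η x = 0)
    (hmass : ∀ η ∈ Θ, ∑' x : S, P η (x : ℤ) = 1)
    (ptil : ℤ → ℝ)
    (hderiv : ∀ x ∈ S, HasDerivAt (fun η => P η x / P η a) (ptil x) θ)
    (hptilnull : ∀ x ∉ S, ptil x = 0)
    {Ω : Type*} [MeasurableSpace Ω] (μ : Measure Ω) [IsProbabilityMeasure μ]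
    (Z : Ω → ℤ) (hZ : Measurable Z)
    (hlaw : ∀ x : ℤ, μ (Z ⁻¹' {x}) = ENNReal.ofReal (P θ x))
    (f : ℤ → ℝ)
    (hbdd : ∃ M : ℝ, ∀ x ∈ S, |f x * ptil x| ≤ M)
    (hsummable : Summable
      (fun x : S => |f ((x : ℤ) + 1) * ptil ((x : ℤ) + 1) - f (x : ℤ) * ptil (x : ℤ)|))
    (hlim : b = ⊤ → Tendsto (fun x : ℤ => f x * ptil x) atTop (nhds 0)) :
    (∫ ω, T2 S f ptil (P θ) (Z ω) ∂μ) = 0 := by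
  classical
  set g : ℤ → ℝ := fun x => f x * ptil x with hg
  have hmem : ∀ x : ℤ, x ∈ S ↔ a ≤ x ∧ (x : WithTop ℤ) ≤ b := by
    intro x; rw [hS]; rfl
  have haS : a ∈ S := (hmem a).2 ⟨le_refl a, hab.le⟩
  have hPnn : ∀ x, 0 ≤ P θ x := by
    intro x
    by_cases hx : x ∈ S
    · exact (hpos θ hθ x hx).le
    · rw [hnull θ hθ x hx]
  have hptila : ptil a = 0 := by
    have h1 : HasDerivAt (fun η => P η a / P η a) 0 θ := by
      have hev : (fun η : ℝ => (1 : ℝ)) =ᶠ[nhds θ] fun η => P η a / P η a := by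
        filter_upwards [hΘ.mem_nhds hθ] with η hη
        exact (div_self (hpos η hη a haS).ne').symm
      exact (hasDerivAt_const θ (1 : ℝ)).congr_of_eventuallyEq hev.symm
    exact (hderiv a haS).unique h1
  have hga : g a = 0 := by simp [hg, hptila]
  have hkey : ∀ x : ℤ, P θ x * T2 S f ptil (P θ) x = S.indicator (fun y => g (y + 1) - g y) x := by
    intro x
    by_cases hx : x ∈ S
    · rw [T2, Set.indicator_of_mem hx, Set.indicator_of_mem hx,
        mul_div_cancel₀ _ (hpos θ hθ x hx).ne']
    · rw [T2, Set.indicator_of_notMem hx, Set.indicator_of_notMem hx, mul_zero]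
  have hsum_ind : Summable (S.indicator (fun y => |g (y + 1) - g y|)) :=
    summable_subtype_iff_indicator.mp hsummable
  set ν : Measure ℤ := μ.map Z with hν
  have hνx : ∀ x : ℤ, ν {x} = ENNReal.ofReal (P θ x) := by
    intro x
    rw [hν, Measure.map_apply hZ (measurableSet_singleton x)]
    exact hlaw x
  have hmeas : Measurable (T2 S f ptil (P θ)) := measurable_of_countable _
  have hint : Integrable (T2 S f ptil (P θ)) ν := by
    refine ⟨hmeas.aestronglyMeasurable, ?_⟩
    rw [HasFiniteIntegral, lintegral_countable']
    have heq : ∀ x : ℤ, ‖T2 S f ptil (P θ) x‖ₑ * ν {x}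
        = ENNReal.ofReal (S.indicator (fun y => |g (y + 1) - g y|) x) := by
      intro x
      rw [hνx, Real.enorm_eq_ofReal_abs, ← ENNReal.ofReal_mul (abs_nonneg _)]
      by_cases hx : x ∈ S
      · rw [T2, Set.indicator_of_mem hx, Set.indicator_of_mem hx,
          abs_div, abs_of_pos (hpos θ hθ x hx),
          div_mul_cancel₀ _ (hpos θ hθ x hx).ne']
      · rw [T2, Set.indicator_of_notMem hx, Set.indicator_of_notMem hx]
        simp
    rw [tsum_congr heq, ← ENNReal.ofReal_tsum_of_nonneg
      (fun x => Set.indicator_nonneg (fun y _ => abs_nonneg _) x) hsum_ind]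
    exact ENNReal.ofReal_lt_top
  have hintgl : (∫ ω, T2 S f ptil (P θ) (Z ω) ∂μ) = ∑' x : S, (g ((x : ℤ) + 1) - g x) := by
    rw [← integral_map hZ.aemeasurable hmeas.aestronglyMeasurable, ← hν,
      integral_countable' hint]
    rw [tsum_subtype S (fun y => g (y + 1) - g y)]
    refine tsum_congr fun x => ?_
    rw [Measure.real, hνx, ENNReal.toReal_ofReal (hPnn x), smul_eq_mul, hkey x]
  rw [hintgl]
  rcases b with _ | c
  · -- b = ⊤
    have hlim' : Tendsto g atTop (nhds 0) := hlim rfl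
    let e : ℕ ≃ S :=
      { toFun := fun n => ⟨a + n, (hmem _).2 ⟨by omega, le_top⟩⟩
        invFun := fun x => (x.1 - a).toNat
        left_inv := fun n => by simp
        right_inv := fun x => by
          have hx : a ≤ x.1 := ((hmem _).1 x.2).1
          ext; simp; omega }
    have hre : (∑' x : S, (g ((x : ℤ) + 1) - g x))
        = ∑' n : ℕ, (g (a + n + 1) - g (a + n)) := by
      rw [← e.tsum_eq (fun x : S => g ((x : ℤ) + 1) - g (x : ℤ))]
      exact tsum_congr fun n => rfl
    rw [hre]
    have hsum2 : Summable (fun n : ℕ => g (a + n + 1) - g (a + n)) := by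
      have h := (hsummable.of_abs).comp_injective e.injective
      exact h.congr fun n => rfl
    have htends := hsum2.hasSum.tendsto_sum_nat
    have hps : ∀ N : ℕ, (∑ n ∈ Finset.range N, (g (a + n + 1) - g (a + n)))
        = g (a + N) - g a := by
      intro N
      have h := Finset.sum_range_sub (fun n : ℕ => g (a + n)) N
      simpa [add_assoc] using h
    have h2 : Tendsto (fun N : ℕ => g (a + N) - g a) atTop (nhds 0) := by
      have hcast : Tendsto (fun N : ℕ => a + (N : ℤ)) atTop atTop :=
        tendsto_atTop_add_const_left atTop a tendsto_natCast_atTop_atTop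
      have h3 := hlim'.comp hcast
      simpa [hga, Function.comp_def] using h3
    have h3 : Tendsto (fun N : ℕ => ∑ n ∈ Finset.range N, (g (a + n + 1) - g (a + n)))
        atTop (nhds 0) := h2.congr fun N => (hps N).symm
    exact tendsto_nhds_unique htends h3
  · -- b = c finite
    rw [WithTop.some_eq_coe] at hmem
    rw [WithTop.some_eq_coe] at hab
    have hac : a ≤ c := by exact_mod_cast hab.le
    have hSIcc : S = (↑(Finset.Icc a c) : Set ℤ) := by
      ext x
      rw [hmem x, Finset.coe_Icc, Set.mem_Icc]
      constructor
      · rintro ⟨h1, h2⟩; exact ⟨h1, by exact_mod_cast h2⟩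
      · rintro ⟨h1, h2⟩; exact ⟨h1, by exact_mod_cast h2⟩
    have hgc1 : g (c + 1) = 0 := by
      have hnot : (c + 1) ∉ S := by
        rw [hmem]
        rintro ⟨-, h⟩
        have : (c + 1 : ℤ) ≤ c := by exact_mod_cast h
        omega
      simp [hg, hptilnull _ hnot]
    have htel : ∀ d : ℤ, a ≤ d →
        (∑ x ∈ Finset.Icc a d, (g (x + 1) - g x)) = g (d + 1) - g a := by
      refine Int.le_induction ?_ ?_
      · simp
      · intro d hd ih
        rw [show Finset.Icc a (d + 1) = insert (d + 1) (Finset.Icc a d) by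
            ext y; simp; omega,
          Finset.sum_insert (by simp), ih]
        ring
    calc (∑' x : S, (g ((x : ℤ) + 1) - g x))
        = ∑' x : ℤ, S.indicator (fun y => g (y + 1) - g y) x :=
          tsum_subtype S (fun y => g (y + 1) - g y)
      _ = ∑' x : ℤ, (↑(Finset.Icc a c) : Set ℤ).indicator (fun y => g (y + 1) - g y) x := by
          rw [hSIcc]
      _ = ∑' x : (↑(Finset.Icc a c) : Set ℤ), (g ((x : ℤ) + 1) - g x) :=
          (tsum_subtype (↑(Finset.Icc a c) : Set ℤ) (fun y => g (y + 1) - g y)).symm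
      _ = ∑ x ∈ Finset.Icc a c, (g (x + 1) - g x) :=
          (Finset.Icc a c).tsum_subtype' (fun y => g (y + 1) - g y)
      _ = 0 := by rw [htel c hac, hgc1, hga, sub_zero]
end

section
/- Let Θ ⊆ ℝ be open and θ ∈ Θ. Let a ∈ ℤ, b ∈ ℤ ∪ {+∞} with a < b, and let {p_η}_{η ∈ Θ} be a family of densities, each with the same support S_p = {a, a+1, …, b}, such that for each x ∈ S_p the map η ↦ p_η(x) is differentiable at θ. Set p := p_θ and p̃(x) := (d/dη)(p_η(x)/p_η(a))|_{η=θ} for x ∈ S_p, p̃(x) := 0 for x ∉ S_p, and assume p̃(x) ≠ 0 for every x ∈ S_p with x > a. Let X be a ℤ-valued random variable with P(X ∈ S_p) > 0 such that E[T2(f,p)(X)] = 0 for every f : ℤ → ℝ with x ↦ f(x)p̃(x) bounded on S_p, (in case b = +∞) f(x)p̃(x) → 0 as x → +∞, and T2(f,p)(X) integrable. Then for all z ∈ ℤ, P(X ≤ z | X ∈ S_p) = Σ_{k ≤ z} p(k). -/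
open MeasureTheory Filter ProbabilityTheory

theorem stmt_4
    (Θ : Set ℝ) (hΘ : IsOpen Θ) (θ : ℝ) (hθ : θ ∈ Θ)
    (a : ℤ) (b : WithTop ℤ) (hab : (a : WithTop ℤ) < b)
    (S : Set ℤ) (hS : S = {x : ℤ | a ≤ x ∧ (x : WithTop ℤ) ≤ b})
    (P : ℝ → ℤ → ℝ)
    (hpos : ∀ η ∈ Θ, ∀ x ∈ S, 0 < P η x)
    (hnull : ∀ η ∈ Θ, ∀ x ∉ S, P η x = 0)
    (hmass : ∀ η ∈ Θ, ∑' x : S, P η (x : ℤ) = 1)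
    (ptil : ℤ → ℝ)
    (hderiv : ∀ x ∈ S, HasDerivAt (fun η => P η x / P η a) (ptil x) θ)
    (hptilnull : ∀ x ∉ S, ptil x = 0)
    (hptilne : ∀ x ∈ S, a < x → ptil x ≠ 0)
    {Ω : Type*} [MeasurableSpace Ω] (μ : Measure Ω) [IsProbabilityMeasure μ]
    (X : Ω → ℤ) (hX : Measurable X)
    (hposS : 0 < μ {ω | X ω ∈ S})
    (hstein : ∀ f : ℤ → ℝ,
      (∃ M : ℝ, ∀ x ∈ S, |f x * ptil x| ≤ M) →
      (b = ⊤ → Tendsto (fun x : ℤ => f x * ptil x) atTop (nhds 0)) →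
      Integrable (fun ω => T2 S f ptil (P θ) (X ω)) μ →
      (∫ ω, T2 S f ptil (P θ) (X ω) ∂μ) = 0) :
    ∀ z : ℤ, (μ[|{ω | X ω ∈ S}]) {ω | X ω ≤ z}
      = ENNReal.ofReal (∑' k : {k : ℤ // k ≤ z}, P θ (k : ℤ)) := by
  intro z
  classical
  have hp0 : ∀ x : ℤ, 0 ≤ P θ x := by
    intro x
    by_cases hx : x ∈ S
    · exact (hpos θ hθ x hx).le
    · rw [hnull θ hθ x hx]
  have hpS : ∀ x ∉ S, P θ x = 0 := fun x hx => hnull θ hθ x hx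
  have hsumS : Summable (fun x : S => P θ (x : ℤ)) := by
    by_contra h
    have h0 := tsum_eq_zero_of_not_summable h
    rw [hmass θ hθ] at h0
    exact one_ne_zero h0
  have hsum : Summable (P θ) := by
    rw [← summable_subtype_and_compl (s := S)]
    exact ⟨hsumS, Summable.congr summable_zero (fun x => (hpS x x.2).symm)⟩
  have htot : ∑' x : ℤ, P θ x = 1 := by
    rw [← hsum.tsum_subtype_add_tsum_subtype_compl S, hmass θ hθ]
    have h0 : ∑' x : ↥Sᶜ, P θ (x : ℤ) = 0 := by
      rw [tsum_congr (fun x : ↥Sᶜ => hpS x x.2)]; exact tsum_zero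
    rw [h0, add_zero]
  set c : ℝ := ∑' k : {k : ℤ // k ≤ z}, P θ (k : ℤ) with hc
  have hc0 : 0 ≤ c := tsum_nonneg (fun k => hp0 k)
  have hc1 : c ≤ 1 := by
    rw [hc, ← htot]
    exact Summable.tsum_le_tsum_of_inj (fun k : {k : ℤ // k ≤ z} => (k : ℤ))
      Subtype.val_injective (fun x _ => hp0 x) (fun k => le_refl _)
      (hsum.subtype _) hsum
  set χ : ℤ → ℝ := fun k => if k ≤ z then 1 else 0 with hχ
  have hχsum : Summable (fun k : ℤ => P θ k * χ k) := by
    apply Summable.of_nonneg_of_le (fun k => ?_) (fun k => ?_) hsum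
    · by_cases hk : k ≤ z <;> simp [hχ, hk, hp0 k]
    · by_cases hk : k ≤ z <;> simp [hχ, hk, hp0 k]
  have hcind : ∑' k : ℤ, P θ k * χ k = c := by
    have hind : (fun k : ℤ => P θ k * χ k) = Set.indicator {k : ℤ | k ≤ z} (P θ) := by
      funext k
      by_cases hk : k ≤ z
      · simp [hχ, hk, Set.indicator_of_mem (show k ∈ {k : ℤ | k ≤ z} from hk)]
      · simp [hχ, hk, Set.indicator_of_notMem (show k ∉ {k : ℤ | k ≤ z} from hk)]
    rw [hind, ← tsum_subtype, hc]
    rfl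
  have hsumh : Summable (fun k : ℤ => P θ k * (χ k - c)) := by
    apply Summable.congr (hχsum.sub (hsum.mul_right c))
    intro k
    rw [mul_sub]
  have htsum0 : ∑' k : ℤ, P θ k * (χ k - c) = 0 := by
    have heq : (fun k : ℤ => P θ k * (χ k - c)) = fun k => P θ k * χ k - P θ k * c :=
      funext fun k => mul_sub _ _ _
    rw [heq, hχsum.tsum_sub (hsum.mul_right c), hcind, tsum_mul_right, htot, one_mul,
      sub_self]
  set g : ℤ → ℝ := fun x => ∑ k ∈ Finset.Icc a (x - 1), P θ k * (χ k - c) with hgdef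
  have hga : g a = 0 := by
    simp only [hgdef]
    rw [Finset.Icc_eq_empty (by omega), Finset.sum_empty]
  have hgout : ∀ x ∉ S, g x = 0 := by
    intro x hx
    rcases lt_or_ge x a with hxa | hax
    · simp only [hgdef]
      rw [Finset.Icc_eq_empty (by omega), Finset.sum_empty]
    · have hzero : ∀ k ∉ Finset.Icc a (x - 1), P θ k * (χ k - c) = 0 := by
        intro k hk
        have hkS : k ∉ S := by
          intro hkS
          apply hx
          rw [hS] at hkS ⊢
          rw [Finset.mem_Icc, not_and_or, not_le, not_le] at hk
          rcases hk with h1 | h2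
          · exact absurd hkS.1 (by omega)
          · refine ⟨hax, le_trans ?_ hkS.2⟩
            exact_mod_cast (by omega : x ≤ k)
        rw [hpS k hkS, zero_mul]
      simp only [hgdef]
      rw [← tsum_eq_sum (L := SummationFilter.unconditional ℤ) hzero]
      exact htsum0
  have hgstep : ∀ x : ℤ, a ≤ x → g (x + 1) - g x = P θ x * (χ x - c) := by
    intro x hax
    have hins : Finset.Icc a (x + 1 - 1) = insert x (Finset.Icc a (x - 1)) := by
      ext k
      simp only [Finset.mem_Icc, Finset.mem_insert]
      omega
    simp only [hgdef]
    rw [hins, Finset.sum_insert (by simp only [Finset.mem_Icc]; omega)]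
    ring
  have hgbound : ∀ x : ℤ, |g x| ≤ 1 := by
    intro x
    simp only [hgdef]
    calc |∑ k ∈ Finset.Icc a (x - 1), P θ k * (χ k - c)|
        ≤ ∑ k ∈ Finset.Icc a (x - 1), |P θ k * (χ k - c)| :=
          Finset.abs_sum_le_sum_abs _ _
      _ ≤ ∑ k ∈ Finset.Icc a (x - 1), P θ k := by
          apply Finset.sum_le_sum
          intro k _
          rw [abs_mul, abs_of_nonneg (hp0 k)]
          have hb1 : |χ k - c| ≤ 1 := by
            rw [abs_le]
            by_cases hk : k ≤ z <;> simp [hχ, hk] <;> constructor <;> linarith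
          calc P θ k * |χ k - c| ≤ P θ k * 1 :=
                mul_le_mul_of_nonneg_left hb1 (hp0 k)
            _ = P θ k := mul_one _
      _ ≤ ∑' k : ℤ, P θ k := hsum.sum_le_tsum _ (fun k _ => hp0 k)
      _ = 1 := htot
  have hgtend : b = ⊤ → Tendsto g atTop (nhds 0) := by
    intro hb
    have hh0 : HasSum (fun k : ℤ => P θ k * (χ k - c)) 0 := htsum0 ▸ hsumh.hasSum
    have hinj : Function.Injective (fun n : ℕ => a + (n : ℤ)) := by
      intro m n h
      simp only at h
      omega
    have hrange : ∀ k : ℤ, k ∉ Set.range (fun n : ℕ => a + (n : ℤ)) →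
        P θ k * (χ k - c) = 0 := by
      intro k hk
      have hka : k < a := by
        by_contra hka
        push_neg at hka
        refine hk ⟨(k - a).toNat, ?_⟩
        show a + ((k - a).toNat : ℤ) = k
        omega
      have hkS : k ∉ S := by
        rw [hS]
        simp only [Set.mem_setOf_eq, not_and]
        intro h
        omega
      rw [hpS k hkS, zero_mul]
    have hnatsum : HasSum (fun n : ℕ => P θ (a + (n : ℤ)) * (χ (a + (n : ℤ)) - c)) 0 :=
      (hinj.hasSum_iff hrange).mpr hh0
    have hnat : ∀ n : ℕ, g (a + (n : ℤ))
        = ∑ i ∈ Finset.range n, P θ (a + (i : ℤ)) * (χ (a + (i : ℤ)) - c) := by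
      intro n
      induction n with
      | zero => simpa using hga
      | succ n ih =>
        rw [Finset.sum_range_succ, ← ih]
        push_cast
        rw [show a + ((n : ℤ) + 1) = (a + (n : ℤ)) + 1 from by ring]
        linarith [hgstep (a + (n : ℤ)) (by omega)]
    have htn : Tendsto (fun x : ℤ => (x - a).toNat) atTop atTop :=
      tendsto_atTop_atTop.mpr (fun N => ⟨a + N, fun x hx => by omega⟩)
    have hcomp := hnatsum.tendsto_sum_nat.comp htn
    apply hcomp.congr'
    filter_upwards [eventually_ge_atTop a] with x hx
    rw [Function.comp_apply, ← hnat]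
    congr 1
    omega
  set f : ℤ → ℝ := fun x => if ptil x = 0 then 0 else g x / ptil x with hfdef
  have hkey : ∀ x : ℤ, f x * ptil x = g x := by
    intro x
    by_cases hx : ptil x = 0
    · rw [hfdef]
      simp only [if_pos hx, zero_mul]
      by_cases hxS : x ∈ S
      · have hax : a ≤ x := by rw [hS] at hxS; exact hxS.1
        rcases eq_or_lt_of_le hax with heq | hlt
        · rw [← heq]; exact hga.symm
        · exact absurd hx (hptilne x hxS hlt)
      · exact (hgout x hxS).symm
    · rw [hfdef]
      simp only [if_neg hx]
      exact div_mul_cancel₀ _ hx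
  have hT2 : T2 S f ptil (P θ) = S.indicator (fun x => χ x - c) := by
    funext x
    by_cases hx : x ∈ S
    · simp only [T2, Set.indicator_of_mem hx]
      rw [hkey, hkey]
      have hax : a ≤ x := by rw [hS] at hx; exact hx.1
      rw [hgstep x hax]
      exact mul_div_cancel_left₀ _ (hpos θ hθ x hx).ne'
    · simp only [T2, Set.indicator_of_notMem hx]
  have hmeasS : MeasurableSet {ω | X ω ∈ S} := hX (Set.to_countable S).measurableSet
  have hmeaszS : MeasurableSet {ω | X ω ∈ S ∧ X ω ≤ z} := by
    have : {ω | X ω ∈ S ∧ X ω ≤ z} = X ⁻¹' {y | y ∈ S ∧ y ≤ z} := rfl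
    rw [this]
    exact hX (Set.to_countable _).measurableSet
  have hdecomp : ∀ ω, S.indicator (fun x => χ x - c) (X ω) =
      Set.indicator {ω | X ω ∈ S ∧ X ω ≤ z} (fun _ => (1 : ℝ)) ω
        - c * Set.indicator {ω | X ω ∈ S} (fun _ => (1 : ℝ)) ω := by
    intro ω
    by_cases hω : X ω ∈ S
    · rw [Set.indicator_of_mem hω,
        Set.indicator_of_mem (show ω ∈ {ω | X ω ∈ S} from hω)]
      by_cases hz : X ω ≤ z
      · rw [Set.indicator_of_mem (show ω ∈ {ω | X ω ∈ S ∧ X ω ≤ z} from ⟨hω, hz⟩)]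
        simp [hχ, hz]
      · rw [Set.indicator_of_notMem
          (show ω ∉ {ω | X ω ∈ S ∧ X ω ≤ z} from fun h => hz h.2)]
        simp [hχ, hz]
    · rw [Set.indicator_of_notMem hω,
        Set.indicator_of_notMem (show ω ∉ {ω | X ω ∈ S} from hω),
        Set.indicator_of_notMem
          (show ω ∉ {ω | X ω ∈ S ∧ X ω ≤ z} from fun h => hω h.1)]
      ring
  have hint1 : Integrable (Set.indicator {ω | X ω ∈ S ∧ X ω ≤ z} (fun _ => (1 : ℝ))) μ :=
    (integrable_const 1).indicator hmeaszS
  have hint2 : Integrable (Set.indicator {ω | X ω ∈ S} (fun _ => (1 : ℝ))) μ :=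
    (integrable_const 1).indicator hmeasS
  have hintT : Integrable (fun ω => T2 S f ptil (P θ) (X ω)) μ := by
    rw [hT2]
    apply Integrable.congr (hint1.sub (hint2.const_mul c))
    exact ae_of_all μ (fun ω => (hdecomp ω).symm)
  have h0 := hstein f ⟨1, fun x _ => by rw [hkey]; exact hgbound x⟩
    (fun hb => by simpa only [hkey] using hgtend hb) hintT
  rw [hT2] at h0
  rw [integral_congr_ae (ae_of_all μ hdecomp),
    integral_sub hint1 (hint2.const_mul c), integral_const_mul,
    integral_indicator_const _ hmeaszS, integral_indicator_const _ hmeasS,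
    smul_eq_mul, smul_eq_mul, mul_one, mul_one] at h0
  have hA't : μ {ω | X ω ∈ S} ≠ ⊤ := measure_ne_top μ _
  have hA'0 : μ {ω | X ω ∈ S} ≠ 0 := hposS.ne'
  rw [ProbabilityTheory.cond_apply hmeasS]
  have hAA : {ω | X ω ∈ S} ∩ {ω | X ω ≤ z} = {ω | X ω ∈ S ∧ X ω ≤ z} := rfl
  rw [hAA]
  have hμA : μ {ω | X ω ∈ S ∧ X ω ≤ z} = ENNReal.ofReal c * μ {ω | X ω ∈ S} := by
    have h1 : (μ {ω | X ω ∈ S ∧ X ω ≤ z}).toReal = c * (μ {ω | X ω ∈ S}).toReal := by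
      simp only [measureReal_def] at h0; linarith [h0]
    rw [← ENNReal.ofReal_toReal (measure_ne_top μ {ω | X ω ∈ S ∧ X ω ≤ z}), h1,
      ENNReal.ofReal_mul hc0, ENNReal.ofReal_toReal hA't]
  rw [hμA, mul_comm (ENNReal.ofReal c) _, ← mul_assoc,
    ENNReal.inv_mul_cancel hA'0 hA't, one_mul]
end

section
/- Let p be a density with support ℕ = {0,1,2,…} and let l : ℕ → ℝ be such that Σ_{k≥0} l(k)p(k) converges absolutely; set E_p[l] := Σ_{k≥0} l(k)p(k). Define f_{1,l}^p(x) := (1/p(x)) Σ_{k=0}^{x−1} (l(k) − E_p[l]) p(k) for x ∈ ℕ (empty sums equal 0). Then f_{1,l}^p solves the Stein equation: T1(f_{1,l}^p, p)(x) = l(x) − E_p[l] for every x ∈ ℕ. -/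
theorem stmt_8
    (p : ℤ → ℝ)
    (hppos : ∀ x : ℤ, 0 ≤ x → 0 < p x) (hpnull : ∀ x : ℤ, ¬ 0 ≤ x → p x = 0)
    (hpmass : ∑' x : ℕ, p (x : ℤ) = 1)
    (l : ℕ → ℝ)
    (habs : Summable (fun k : ℕ => |l k * p (k : ℤ)|))
    (E : ℝ) (hE : E = ∑' k : ℕ, l k * p (k : ℤ))
    (f : ℤ → ℝ)
    (hf : ∀ x : ℤ, 0 ≤ x →
      f x = (1 / p x) * ∑ k ∈ Finset.range x.toNat, (l k - E) * p (k : ℤ)) :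
    ∀ x : ℤ, 0 ≤ x → T1 {y : ℤ | 0 ≤ y} f p x = l x.toNat - E := by
  intro x hx
  have hx1 : (0:ℤ) ≤ x + 1 := by omega
  have hpx := hppos x hx
  have hpx1 := hppos (x+1) hx1
  have hxt : ((x.toNat : ℤ)) = x := Int.toNat_of_nonneg hx
  have hfx : f x * p x = ∑ k ∈ Finset.range x.toNat, (l k - E) * p (k : ℤ) := by
    rw [hf x hx]; field_simp
  have hfx1 : f (x+1) * p (x+1) = ∑ k ∈ Finset.range ((x+1).toNat), (l k - E) * p (k : ℤ) := by
    rw [hf (x+1) hx1]; field_simp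
  have ht : (x+1).toNat = x.toNat + 1 := by omega
  rw [ht, Finset.sum_range_succ, hxt] at hfx1
  unfold T1
  rw [Set.indicator_of_mem (by exact hx : x ∈ {y : ℤ | 0 ≤ y})]
  rw [hfx1, hfx]
  field_simp
  ring
end

section
/- Let p be a density with support ℕ = {0,1,2,…}, let N ∈ ℕ, and let q be a density with support {0,…,N}. Let l : ℕ → ℝ be such that E_p[l] := Σ_{k≥0} l(k)p(k) converges absolutely, and define f_{1,l}^p(x) := (1/p(x)) Σ_{k=0}^{x−1} (l(k) − E_p[l]) p(k) for x ∈ ℕ. Define the generalized score function r1(p,q)(x) := p(x+1)/p(x) − q(x+1)/q(x) for 0 ≤ x ≤ N−1 and r1(p,q)(N) := p(N+1)/p(N). Then Σ_{x=0}^N l(x)q(x) − E_p[l] = Σ_{x=0}^N q(x) f_{1,l}^p(x+1) r1(p,q)(x). -/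
theorem stmt_9
    (p : ℤ → ℝ)
    (hppos : ∀ x : ℤ, 0 ≤ x → 0 < p x) (hpnull : ∀ x : ℤ, ¬ 0 ≤ x → p x = 0)
    (hpmass : ∑' x : ℕ, p (x : ℤ) = 1)
    (N : ℕ) (q : ℤ → ℝ)
    (hqpos : ∀ x : ℤ, 0 ≤ x → x ≤ (N : ℤ) → 0 < q x)
    (hqnull : ∀ x : ℤ, ¬ (0 ≤ x ∧ x ≤ (N : ℤ)) → q x = 0)
    (hqmass : ∑ x ∈ Finset.range (N + 1), q (x : ℤ) = 1)
    (l : ℕ → ℝ)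
    (habs : Summable (fun k : ℕ => |l k * p (k : ℤ)|))
    (E : ℝ) (hE : E = ∑' k : ℕ, l k * p (k : ℤ))
    (f : ℤ → ℝ)
    (hf : ∀ x : ℤ, 0 ≤ x →
      f x = (1 / p x) * ∑ k ∈ Finset.range x.toNat, (l k - E) * p (k : ℤ))
    (r : ℕ → ℝ)
    (hr : ∀ x : ℕ, x < N → r x = p ((x : ℤ) + 1) / p (x : ℤ) - q ((x : ℤ) + 1) / q (x : ℤ))
    (hrN : r N = p ((N : ℤ) + 1) / p (N : ℤ)) :
    (∑ x ∈ Finset.range (N + 1), l x * q (x : ℤ)) - E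
      = ∑ x ∈ Finset.range (N + 1), q (x : ℤ) * f ((x : ℤ) + 1) * r x := by
  set S : ℕ → ℝ := fun n => ∑ k ∈ Finset.range n, (l k - E) * p (k : ℤ) with hSdef
  set T : ℕ → ℝ := fun n => q (n : ℤ) * S n / p (n : ℤ) with hTdef
  have hfS : ∀ x : ℕ, f ((x : ℤ) + 1) = (1 / p ((x : ℤ) + 1)) * S (x + 1) := by
    intro x
    have h := hf ((x : ℤ) + 1) (by positivity)
    have ht : ((x : ℤ) + 1).toNat = x + 1 := by omega
    rw [h, ht]
  have key : ∀ x ∈ Finset.range (N + 1),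
      q (x : ℤ) * f ((x : ℤ) + 1) * r x = (T x - T (x + 1)) + q (x : ℤ) * (l x - E) := by
    intro x hx
    simp only [Finset.mem_range] at hx
    have hp1 : (0 : ℝ) < p (x : ℤ) := hppos _ (by positivity)
    have hp2 : (0 : ℝ) < p ((x : ℤ) + 1) := hppos _ (by positivity)
    have hSsucc : S (x + 1) = S x + (l x - E) * p (x : ℤ) := Finset.sum_range_succ _ _
    rcases Nat.lt_or_ge x N with h | h
    · have hq1 : (0 : ℝ) < q (x : ℤ) := hqpos _ (by positivity) (by exact_mod_cast h.le)
      have hq2 : (0 : ℝ) < q ((x : ℤ) + 1) := hqpos _ (by positivity) (by exact_mod_cast h)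
      rw [hr x h, hfS x, hTdef]
      simp only
      push_cast
      rw [hSsucc]
      field_simp
      ring
    · have hxN : x = N := by omega
      have hq1 : (0 : ℝ) < q (x : ℤ) := hqpos _ (by positivity)
        (by exact_mod_cast (by omega : x ≤ N))
      have hqN1 : q ((x : ℤ) + 1) = 0 := hqnull _ (by push_cast; omega)
      have hrx : r x = p ((x : ℤ) + 1) / p (x : ℤ) := by rw [hxN]; exact hrN
      rw [hrx, hfS x, hTdef]
      simp only
      push_cast
      rw [hSsucc, hqN1]
      field_simp
      ring
  rw [Finset.sum_congr rfl key, Finset.sum_add_distrib, Finset.sum_range_sub']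
  have hT0 : T 0 = 0 := by simp [hTdef, hSdef]
  have hTN1 : T (N + 1) = 0 := by
    have hqN1 : q ((N : ℤ) + 1) = 0 := hqnull _ (by omega)
    simp only [hTdef]
    push_cast
    rw [hqN1]
    ring
  rw [hT0, hTN1]
  have : ∑ x ∈ Finset.range (N + 1), q (x : ℤ) * (l x - E)
      = (∑ x ∈ Finset.range (N + 1), l x * q (x : ℤ)) - E := by
    have h1 : ∀ x ∈ Finset.range (N + 1),
        q (x : ℤ) * (l x - E) = l x * q (x : ℤ) - E * q (x : ℤ) := by
      intro x _; ring
    rw [Finset.sum_congr rfl h1, Finset.sum_sub_distrib, ← Finset.mul_sum, hqmass, mul_one]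
  rw [this]
  ring
end

section
/- Let p be a density with support ℕ = {0,1,2,…} and let p̃ : ℤ → ℝ satisfy p̃(x) = 0 for x ≤ 0 and p̃(x) ≠ 0 for x ≥ 1. Let l : ℕ → ℝ be such that E_p[l] := Σ_{k≥0} l(k)p(k) converges absolutely. Define f_{2,l}^p(x) := (1/p̃(x)) Σ_{k=0}^{x−1} (l(k) − E_p[l]) p(k) for x ≥ 1 and f_{2,l}^p(x) := 0 for x ≤ 0. Then f_{2,l}^p solves the Stein equation: T2(f_{2,l}^p, p)(x) = l(x) − E_p[l] for every x ∈ ℕ. -/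
theorem stmt_11
    (p : ℤ → ℝ)
    (hppos : ∀ x : ℤ, 0 ≤ x → 0 < p x) (hpnull : ∀ x : ℤ, ¬ 0 ≤ x → p x = 0)
    (hpmass : ∑' x : ℕ, p (x : ℤ) = 1)
    (ptil : ℤ → ℝ)
    (hptil0 : ∀ x : ℤ, x ≤ 0 → ptil x = 0)
    (hptilne : ∀ x : ℤ, 1 ≤ x → ptil x ≠ 0)
    (l : ℕ → ℝ)
    (habs : Summable (fun k : ℕ => |l k * p (k : ℤ)|))
    (E : ℝ) (hE : E = ∑' k : ℕ, l k * p (k : ℤ))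
    (f : ℤ → ℝ)
    (hf : ∀ x : ℤ, 1 ≤ x →
      f x = (1 / ptil x) * ∑ k ∈ Finset.range x.toNat, (l k - E) * p (k : ℤ))
    (hf0 : ∀ x : ℤ, x ≤ 0 → f x = 0) :
    ∀ x : ℤ, 0 ≤ x → T2 {y : ℤ | 0 ≤ y} f ptil p x = l x.toNat - E := by
  have key : ∀ x : ℤ, 0 ≤ x →
      f x * ptil x = ∑ k ∈ Finset.range x.toNat, (l k - E) * p (k : ℤ) := by
    intro x hx
    rcases eq_or_lt_of_le hx with h0 | h1
    · rw [← h0]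
      simp [hf0 0 le_rfl]
    · have h1 : 1 ≤ x := h1
      rw [hf x h1, one_div, inv_mul_eq_div, div_mul_cancel₀ _ (hptilne x h1)]
  intro x hx
  have hmem : x ∈ {y : ℤ | 0 ≤ y} := hx
  rw [T2, Set.indicator_of_mem hmem]
  rw [key x hx, key (x + 1) (by linarith)]
  have htn : (x + 1).toNat = x.toNat + 1 := by omega
  rw [htn, Finset.sum_range_succ]
  have hxcast : ((x.toNat : ℤ)) = x := Int.toNat_of_nonneg hx
  rw [hxcast]
  field_simp [(hppos x hx).ne']
  ring
end

section
/- Let p and q be densities, both with support ℕ = {0,1,2,…}, and let p̃ : ℤ → ℝ satisfy p̃(x) = 0 for x ≤ 0 and p̃(x) ≠ 0 for x ≥ 1, and suppose there is a constant c such that p̃(x+1)/p(x) = c for all x ∈ ℕ. Let l : ℕ → ℝ be such that E_p[l] := Σ_{k≥0} l(k)p(k) and E_q[l] := Σ_{k≥0} l(k)q(k) converge absolutely. Define f_{2,l}^p(x) := (1/p̃(x)) Σ_{k=0}^{x−1} (l(k) − E_p[l]) p(k) for x ≥ 1, f_{2,l}^p(0) := 0, and r2(p,q)(x) := (p̃(x+1)/p(x))·(q(x−1)/q(x))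 − p̃(x)/p(x) with q(−1) := 0. Assume Σ_{x≥0} q(x)|f_{2,l}^p(x) r2(p,q)(x)| < ∞ and f_{2,l}^p(n+1) q(n) → 0 as n → ∞. Then E_q[l] − E_p[l] = Σ_{x≥0} q(x) f_{2,l}^p(x) r2(p,q)(x). -/
open Filter

theorem stmt_12
    (p q : ℤ → ℝ)
    (hppos : ∀ x : ℤ, 0 ≤ x → 0 < p x) (hpnull : ∀ x : ℤ, ¬ 0 ≤ x → p x = 0)
    (hpmass : ∑' x : ℕ, p (x : ℤ) = 1)
    (hqpos : ∀ x : ℤ, 0 ≤ x → 0 < q x) (hqnull : ∀ x : ℤ, ¬ 0 ≤ x → q x = 0)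
    (hqmass : ∑' x : ℕ, q (x : ℤ) = 1)
    (ptil : ℤ → ℝ)
    (hptil0 : ∀ x : ℤ, x ≤ 0 → ptil x = 0)
    (hptilne : ∀ x : ℤ, 1 ≤ x → ptil x ≠ 0)
    (c : ℝ) (hc : ∀ x : ℤ, 0 ≤ x → ptil (x + 1) / p x = c)
    (l : ℕ → ℝ)
    (habsp : Summable (fun k : ℕ => |l k * p (k : ℤ)|))
    (habsq : Summable (fun k : ℕ => |l k * q (k : ℤ)|))
    (Ep : ℝ) (hEp : Ep = ∑' k : ℕ, l k * p (k : ℤ))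
    (Eq : ℝ) (hEq : Eq = ∑' k : ℕ, l k * q (k : ℤ))
    (f : ℤ → ℝ)
    (hf : ∀ x : ℤ, 1 ≤ x →
      f x = (1 / ptil x) * ∑ k ∈ Finset.range x.toNat, (l k - Ep) * p (k : ℤ))
    (hf0 : f 0 = 0)
    (r2 : ℤ → ℝ)
    (hr2 : ∀ x : ℤ, 0 ≤ x →
      r2 x = ptil (x + 1) / p x * (q (x - 1) / q x) - ptil x / p x)
    (habs2 : Summable (fun x : ℕ => q (x : ℤ) * |f (x : ℤ) * r2 (x : ℤ)|))
    (hdecay : Tendsto (fun n : ℕ => f ((n : ℤ) + 1) * q (n : ℤ)) atTop (nhds 0)) :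
    Eq - Ep = ∑' x : ℕ, q (x : ℤ) * f (x : ℤ) * r2 (x : ℤ) := by

  have hqsum : Summable (fun k : ℕ => q (k : ℤ)) := by
    by_contra h
    rw [tsum_eq_zero_of_not_summable h] at hqmass
    norm_num at hqmass
  set a : ℕ → ℝ := fun x => c * f ((x : ℤ) + 1) * q (x : ℤ) with ha
  set a' : ℕ → ℝ := fun x => c * f (x : ℤ) * q ((x : ℤ) - 1) with ha'
  have key : ∀ x : ℕ, q (x:ℤ) * (l x - Ep) - q (x:ℤ) * f (x:ℤ) * r2 (x:ℤ) = a x - a' x := by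
    intro x
    have hx0 : (0:ℤ) ≤ (x:ℤ) := Int.natCast_nonneg x
    have hpx : p (x:ℤ) ≠ 0 := (hppos _ hx0).ne'
    have hqx : q (x:ℤ) ≠ 0 := (hqpos _ hx0).ne'
    have hptil1 : ptil ((x:ℤ)+1) = c * p (x:ℤ) := by
      have h1 := hc (x:ℤ) hx0
      rw [div_eq_iff hpx] at h1
      linarith [h1]
    have hfp1 : f ((x:ℤ)+1) * ptil ((x:ℤ)+1) = ∑ k ∈ Finset.range (x+1), (l k - Ep) * p (k:ℤ) := by
      have h1 := hf ((x:ℤ)+1) (by omega)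
      have htn : ((x:ℤ)+1).toNat = x + 1 := by omega
      rw [htn] at h1
      have hne := hptilne ((x:ℤ)+1) (by omega)
      rw [h1]; field_simp
    have hfp0 : f (x:ℤ) * ptil (x:ℤ) = ∑ k ∈ Finset.range x, (l k - Ep) * p (k:ℤ) := by
      rcases Nat.eq_zero_or_pos x with hx | hx
      · subst hx; simp [hf0]
      · have h1 := hf (x:ℤ) (by omega)
        have htn : ((x:ℤ)).toNat = x := by omega
        rw [htn] at h1
        have hne := hptilne (x:ℤ) (by omega)
        rw [h1]; field_simp
    have hlEp : (l x - Ep) * p (x:ℤ) = f ((x:ℤ)+1) * ptil ((x:ℤ)+1) - f (x:ℤ) * ptil (x:ℤ) := by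
      rw [hfp1, hfp0, Finset.sum_range_succ]; ring
    have hlEp' : l x - Ep = (f ((x:ℤ)+1) * (c * p (x:ℤ)) - f (x:ℤ) * ptil (x:ℤ)) / p (x:ℤ) := by
      rw [← hptil1, eq_div_iff hpx]; linarith [hlEp]
    rw [hr2 (x:ℤ) hx0, hptil1, hlEp']
    simp only [ha, ha']
    field_simp
    ring
  have ht : Summable (fun x : ℕ => q (x:ℤ) * f (x:ℤ) * r2 (x:ℤ)) := by
    apply Summable.of_abs
    have heq : (fun x : ℕ => |q (x:ℤ) * f (x:ℤ) * r2 (x:ℤ)|)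
        = fun x : ℕ => q (x:ℤ) * |f (x:ℤ) * r2 (x:ℤ)| := by
      funext x
      rw [mul_assoc, abs_mul, abs_of_pos (hqpos _ (Int.natCast_nonneg x))]
    rw [heq]; exact habs2
  have hlq : Summable (fun x : ℕ => l x * q (x:ℤ)) := Summable.of_abs habsq
  have hs : Summable (fun x : ℕ => q (x:ℤ) * (l x - Ep)) := by
    have := hlq.sub (hqsum.mul_left Ep)
    exact this.congr (fun x => by ring)
  have hssum : ∑' x : ℕ, q (x:ℤ) * (l x - Ep) = Eq - Ep := by
    have h1 : ∑' x : ℕ, q (x:ℤ) * (l x - Ep)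
        = ∑' x : ℕ, (l x * q (x:ℤ) - Ep * q (x:ℤ)) := by
      congr 1; funext x; ring
    rw [h1, Summable.tsum_sub hlq (hqsum.mul_left Ep), tsum_mul_left, hqmass, hEq]
    ring
  have hdsum : Summable (fun x : ℕ => a x - a' x) := (hs.sub ht).congr key
  have hP : ∀ n : ℕ, ∑ i ∈ Finset.range (n+1), (a i - a' i) = a n := by
    intro n
    have h2 : ∑ i ∈ Finset.range (n+1), a' i = ∑ i ∈ Finset.range n, a i := by
      rw [Finset.sum_range_succ' (fun i => a' i) n]
      have h3 : ∀ i : ℕ, a' (i+1) = a i := by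
        intro i
        simp only [ha, ha']
        push_cast
        ring_nf
      simp only [h3]
      have : a' 0 = 0 := by
        simp only [ha']
        rw [hqnull (-1) (by norm_num) |>.symm]
        norm_num
        rw [hqnull (-1) (by norm_num)]
        ring
      rw [this, add_zero]
    rw [Finset.sum_sub_distrib, h2, Finset.sum_range_succ]
    ring
  have hzero : ∑' x : ℕ, (a x - a' x) = 0 := by
    have htend : Tendsto (fun n : ℕ => ∑ i ∈ Finset.range n, (a i - a' i)) atTop (nhds 0) := by
      rw [← tendsto_add_atTop_iff_nat 1]
      simp only [hP]
      have : Tendsto (fun n : ℕ => c * (f ((n:ℤ)+1) * q (n:ℤ))) atTop (nhds (c * 0)) :=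
        hdecay.const_mul c
      simpa [ha, mul_assoc] using this
    exact (hdsum.hasSum_iff_tendsto_nat.mpr htend).tsum_eq
  have hdiff : ∑' x : ℕ, (q (x:ℤ) * (l x - Ep) - q (x:ℤ) * f (x:ℤ) * r2 (x:ℤ)) = 0 := by
    rw [tsum_congr key]; exact hzero
  rw [Summable.tsum_sub hs ht, hssum] at hdiff
  linarith [hdiff]
end

section
/- Let λ > 0, let N ∈ ℕ, and let q be a density with support {0,…,N}. Let l : ℕ → ℝ be such that E_{Po(λ)}[l] := Σ_{k≥0} l(k) e^{−λ}λ^k/k! converges absolutely, and define f(x) := (x! e^λ/λ^x) Σ_{k=0}^{x−1} (l(k) − E_{Po(λ)}[l]) e^{−λ}λ^k/k! for x ∈ ℕ. Then Σ_{x=0}^N l(x)q(x) − E_{Po(λ)}[l] = Σ_{x=0}^N q(x) · (√λ f(x+1)/(x+1)) · √λ (1 − (x+1)q(x+1)/(λ q(x))), with the convention q(N+1) := 0. -/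
theorem stmt_13
    (lam : ℝ) (hlam : 0 < lam)
    (N : ℕ) (q : ℤ → ℝ)
    (hqpos : ∀ x : ℤ, 0 ≤ x → x ≤ (N : ℤ) → 0 < q x)
    (hqnull : ∀ x : ℤ, ¬ (0 ≤ x ∧ x ≤ (N : ℤ)) → q x = 0)
    (hqmass : ∑ x ∈ Finset.range (N + 1), q (x : ℤ) = 1)
    (l : ℕ → ℝ)
    (habs : Summable (fun k : ℕ => |l k * (Real.exp (-lam) * lam ^ k / (Nat.factorial k : ℝ))|))
    (E : ℝ) (hE : E = ∑' k : ℕ, l k * (Real.exp (-lam) * lam ^ k / (Nat.factorial k : ℝ)))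
    (f : ℕ → ℝ)
    (hf : ∀ x : ℕ, f x = ((Nat.factorial x : ℝ) * Real.exp lam / lam ^ x)
      * ∑ k ∈ Finset.range x, (l k - E) * (Real.exp (-lam) * lam ^ k / (Nat.factorial k : ℝ))) :
    (∑ x ∈ Finset.range (N + 1), l x * q (x : ℤ)) - E
      = ∑ x ∈ Finset.range (N + 1),
          q (x : ℤ) * (Real.sqrt lam * f (x + 1) / ((x : ℝ) + 1))
            * (Real.sqrt lam * (1 - ((x : ℝ) + 1) * q ((x : ℤ) + 1) / (lam * q (x : ℤ)))) := by
  have hlam' : lam ≠ 0 := hlam.ne'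
  have hs : Real.sqrt lam * Real.sqrt lam = lam := Real.mul_self_sqrt hlam.le
  have hsne : Real.sqrt lam ≠ 0 := by positivity
  have hexp : Real.exp lam * Real.exp (-lam) = 1 := by
    rw [← Real.exp_add]; simp
  have hstein : ∀ x : ℕ, lam * f (x + 1) / ((x : ℝ) + 1) = f x + (l x - E) := by
    intro x
    rw [hf (x + 1), hf x, Finset.sum_range_succ, Nat.factorial_succ]
    have h1 : ((x : ℝ) + 1) ≠ 0 := by positivity
    have h2 : (lam : ℝ) ^ x ≠ 0 := pow_ne_zero _ hlam'
    have h3 : ((Nat.factorial x : ℝ)) ≠ 0 := by positivity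
    have h4 : Real.exp lam ≠ 0 := Real.exp_ne_zero _
    have h5 : Real.exp (-lam) ≠ 0 := Real.exp_ne_zero _
    push_cast
    rw [Real.exp_neg]
    field_simp
    ring
  have key : ∀ x ∈ Finset.range (N + 1),
      q (x : ℤ) * (Real.sqrt lam * f (x + 1) / ((x : ℝ) + 1))
        * (Real.sqrt lam * (1 - ((x : ℝ) + 1) * q ((x : ℤ) + 1) / (lam * q (x : ℤ))))
      = (q (x : ℤ) * f x - q (((x : ℕ) + 1 : ℕ) : ℤ) * f (x + 1)) + q (x : ℤ) * (l x - E) := by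
    intro x hx
    have hx' : (x : ℤ) ≤ (N : ℤ) := by
      exact_mod_cast Nat.lt_succ_iff.mp (Finset.mem_range.mp hx)
    have hq : q (x : ℤ) ≠ 0 := (hqpos x (by positivity) hx').ne'
    have h1 : ((x : ℝ) + 1) ≠ 0 := by positivity
    have hA := hstein x
    have hcast : (((x : ℕ) + 1 : ℕ) : ℤ) = (x : ℤ) + 1 := by push_cast; ring
    have step : q (x : ℤ) * (Real.sqrt lam * f (x + 1) / ((x : ℝ) + 1))
        * (Real.sqrt lam * (1 - ((x : ℝ) + 1) * q ((x : ℤ) + 1) / (lam * q (x : ℤ))))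
        = q (x : ℤ) * (lam * f (x + 1) / ((x : ℝ) + 1)) - q ((x : ℤ) + 1) * f (x + 1) := by
      set s := Real.sqrt lam with hsdef
      rw [show lam = s * s from hs.symm]
      field_simp
    rw [hcast, step, hA]
    ring
  rw [Finset.sum_congr rfl key, Finset.sum_add_distrib,
    Finset.sum_range_sub' (fun x : ℕ => q (x : ℤ) * f x)]
  have h0 : f 0 = 0 := by simp [hf]
  have hN : q (((N + 1 : ℕ) : ℤ)) = 0 := hqnull _ (by push_cast; omega)
  rw [h0, hN]
  simp only [mul_zero, zero_mul, sub_zero, zero_add]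
  rw [Finset.sum_congr rfl (fun x _ => by ring :
    ∀ x ∈ Finset.range (N + 1), q (x : ℤ) * (l x - E) = l x * q (x : ℤ) - E * q (x : ℤ)),
    Finset.sum_sub_distrib, ← Finset.mul_sum, hqmass]
  ring
end

section
/- Let λ > 0 and let q be a density with support ℕ = {0,1,2,…}. Let l : ℕ → ℝ be such that E_{Po(λ)}[l] := Σ_{k≥0} l(k) e^{−λ}λ^k/k! and E_q[l] := Σ_{k≥0} l(k)q(k) converge absolutely. Define f(x) := ((x−1)!/λ^{x−1}) Σ_{k=0}^{x−1} (l(k) − E_{Po(λ)}[l]) e^{−λ}λ^k/k! for x ≥ 1 and f(0) := 0. Assume Σ_{x≥1} q(x)|f(x)(λ q(x−1)/q(x) − x)| < ∞ and f(n+1)q(n) → 0 as n → ∞. Then E_q[l] − E_{Po(λ)}[l] = Σ_{x≥1} q(x) · (λ^{−1} e^{λ} f(x)) · (λ q(x−1)/q(x) − x). -/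
open Filter

theorem stmt_14
    (lam : ℝ) (hlam : 0 < lam)
    (q : ℕ → ℝ)
    (hqpos : ∀ x : ℕ, 0 < q x)
    (hqmass : ∑' x : ℕ, q x = 1)
    (l : ℕ → ℝ)
    (habsp : Summable (fun k : ℕ => |l k * (Real.exp (-lam) * lam ^ k / (Nat.factorial k : ℝ))|))
    (habsq : Summable (fun k : ℕ => |l k * q k|))
    (E : ℝ) (hE : E = ∑' k : ℕ, l k * (Real.exp (-lam) * lam ^ k / (Nat.factorial k : ℝ)))
    (f : ℕ → ℝ)
    (hf0 : f 0 = 0)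
    (hf : ∀ x : ℕ, 1 ≤ x →
      f x = ((Nat.factorial (x - 1) : ℝ) / lam ^ (x - 1))
        * ∑ k ∈ Finset.range x, (l k - E) * (Real.exp (-lam) * lam ^ k / (Nat.factorial k : ℝ)))
    (habs2 : Summable (fun x : ℕ =>
      q (x + 1) * |f (x + 1) * (lam * q x / q (x + 1) - ((x : ℝ) + 1))|))
    (hdecay : Tendsto (fun n : ℕ => f (n + 1) * q n) atTop (nhds 0)) :
    (∑' k : ℕ, l k * q k) - E
      = ∑' x : ℕ, q (x + 1) * (lam⁻¹ * Real.exp lam * f (x + 1))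
          * (lam * q x / q (x + 1) - ((x : ℝ) + 1)) := by
  have hlamne : lam ≠ 0 := hlam.ne'
  have hexpne : Real.exp lam ≠ 0 := Real.exp_ne_zero lam
  have hqne : ∀ x, q x ≠ 0 := fun x => (hqpos x).ne'
  set c : ℝ := lam⁻¹ * Real.exp lam with hc
  have hc' : c = Real.exp lam / lam := by rw [hc]; ring
  -- key recursion
  have key : ∀ x : ℕ, lam * (c * f (x + 1)) = (l x - E) + (x : ℝ) * (c * f x) := by
    intro x
    rcases x with _ | m
    · have h1 : f 1 = (l 0 - E) * Real.exp (-lam) := by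
        rw [hf 1 le_rfl]; simp
      rw [h1, hf0, hc', Real.exp_neg]
      simp only [Nat.cast_zero]
      field_simp
      ring
    · have h1 : f (m + 1 + 1) = ((Nat.factorial (m + 1) : ℝ) / lam ^ (m + 1))
          * ∑ k ∈ Finset.range (m + 2), (l k - E) * (Real.exp (-lam) * lam ^ k / (Nat.factorial k : ℝ)) := by
        rw [hf (m + 2) (by omega)]; norm_num
      have h2 : f (m + 1) = ((Nat.factorial m : ℝ) / lam ^ m)
          * ∑ k ∈ Finset.range (m + 1), (l k - E) * (Real.exp (-lam) * lam ^ k / (Nat.factorial k : ℝ)) := by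
        rw [hf (m + 1) (by omega)]; norm_num
      rw [h1, h2, Finset.sum_range_succ, hc']
      set A := ∑ k ∈ Finset.range (m + 1), (l k - E) * (Real.exp (-lam) * lam ^ k / (Nat.factorial k : ℝ))
      have hfac : (Nat.factorial (m + 1) : ℝ) = ((m : ℝ) + 1) * Nat.factorial m := by
        push_cast [Nat.factorial_succ]; ring
      have hfacne : (Nat.factorial m : ℝ) ≠ 0 := Nat.cast_ne_zero.mpr (Nat.factorial_ne_zero m)
      have hm1 : ((m : ℝ) + 1) ≠ 0 := by positivity
      rw [hfac, Real.exp_neg, pow_succ]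
      push_cast
      field_simp
      ring
  -- telescoping partial sums
  have tele : ∀ n : ℕ,
      ∑ x ∈ Finset.range n, q (x + 1) * (c * f (x + 1)) * (lam * q x / q (x + 1) - ((x : ℝ) + 1))
      = (∑ x ∈ Finset.range n, q x * (l x - E)) - (n : ℝ) * q n * (c * f n) := by
    intro n
    induction n with
    | zero => simp
    | succ n ih =>
      rw [Finset.sum_range_succ, Finset.sum_range_succ, ih]
      have hk := key n
      have hq := hqne (n + 1)
      have hstep : q (n + 1) * (c * f (n + 1)) * (lam * q n / q (n + 1) - ((n : ℝ) + 1))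
          = q n * (l n - E) + ((n : ℝ) * q n * (c * f n) - ((n : ℝ) + 1) * q (n + 1) * (c * f (n + 1))) := by
        field_simp
        linear_combination q n * hk
      rw [hstep]
      push_cast
      ring
  -- summability
  have hqsum : Summable q := by
    by_contra h
    rw [tsum_eq_zero_of_not_summable h] at hqmass
    norm_num at hqmass
  have hlq : Summable (fun k => l k * q k) := summable_abs_iff.mp habsq
  have hu : Summable (fun x : ℕ => q (x + 1) * f (x + 1) * (lam * q x / q (x + 1) - ((x : ℝ) + 1))) := by
    apply summable_abs_iff.mp
    apply habs2.congr
    intro x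
    rw [abs_mul, abs_mul, abs_mul, abs_of_pos (hqpos (x + 1))]
    ring
  have ht : Summable (fun x : ℕ => q (x + 1) * (c * f (x + 1)) * (lam * q x / q (x + 1) - ((x : ℝ) + 1))) := by
    apply (hu.mul_left c).congr
    intro x; ring
  -- limit of the first part
  have h1 : HasSum (fun x : ℕ => l x * q x) (∑' k : ℕ, l k * q k) := hlq.hasSum
  have h2 : HasSum (fun x : ℕ => E * q x) E := by
    simpa [hqmass] using hqsum.hasSum.mul_left E
  have h3 : HasSum (fun x : ℕ => q x * (l x - E)) ((∑' k : ℕ, l k * q k) - E) := by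
    have h4 := h1.sub h2
    have heq : (fun x : ℕ => l x * q x - E * q x) = fun x : ℕ => q x * (l x - E) := by
      funext x; ring
    rwa [heq] at h4
  have hA : Tendsto (fun n : ℕ => ∑ x ∈ Finset.range n, q x * (l x - E)) atTop
      (nhds ((∑' k : ℕ, l k * q k) - E)) := h3.tendsto_sum_nat
  -- boundary term tends to zero
  have hBshift : Tendsto (fun n : ℕ => ((n : ℝ) + 1) * q (n + 1) * (c * f (n + 1))) atTop (nhds 0) := by
    have h4 : Tendsto (fun n : ℕ => lam * q n * (c * f (n + 1))) atTop (nhds 0) := by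
      have h5 := hdecay.const_mul (lam * c)
      rw [mul_zero] at h5
      exact h5.congr (fun n => by ring)
    have h5 : Tendsto (fun n : ℕ => q (n + 1) * (c * f (n + 1)) * (lam * q n / q (n + 1) - ((n : ℝ) + 1)))
        atTop (nhds 0) := ht.tendsto_atTop_zero
    have h6 := h4.sub h5
    rw [sub_zero] at h6
    apply h6.congr
    intro n
    have hq := hqne (n + 1)
    field_simp
    ring
  have hB : Tendsto (fun n : ℕ => (n : ℝ) * q n * (c * f n)) atTop (nhds 0) := by
    apply (tendsto_add_atTop_iff_nat 1).mp
    exact hBshift.congr (fun n => by push_cast; ring)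
  -- combine
  have hT := ht.hasSum.tendsto_sum_nat
  have hT2 : Tendsto (fun n : ℕ => ∑ x ∈ Finset.range n,
      q (x + 1) * (c * f (x + 1)) * (lam * q x / q (x + 1) - ((x : ℝ) + 1))) atTop
      (nhds ((∑' k : ℕ, l k * q k) - E)) := by
    have h7 := hA.sub hB
    rw [sub_zero] at h7
    exact Tendsto.congr (fun n => (tele n).symm) h7
  exact tendsto_nhds_unique hT2 hT
end

section
/- Let n ≥ 1 be an integer and 0 < λ < n, and let q be the Binomial(n, λ/n) density: q(x) = C(n,x)(λ/n)^x (1 − λ/n)^{n−x} for 0 ≤ x ≤ n and q(x) = 0 otherwise. Then the scaled Fisher information of q relative to Po(λ) satisfies K1(Po(λ),q) := λ Σ_{x=0}^n q(x)((x+1)q(x+1)/(λ q(x)) − 1)² = λ²/(n(n−λ)), with the convention q(n+1) := 0. -/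
open Finset

lemma L0 (m : ℕ) (p : ℝ) :
    ∑ x ∈ range (m+1), (m.choose x : ℝ) * p ^ x * (1-p) ^ (m-x) = 1 := by
  calc ∑ x ∈ range (m+1), (m.choose x : ℝ) * p ^ x * (1-p) ^ (m-x)
      = (p + (1-p))^m := by rw [add_pow]; exact sum_congr rfl fun k _ => by ring
    _ = 1 := by norm_num

lemma L1 (m : ℕ) (p : ℝ) :
    ∑ x ∈ range (m+1), (x:ℝ) * (m.choose x : ℝ) * p ^ x * (1-p) ^ (m-x) = m * p := by
  induction m with
  | zero => simp
  | succ k _ =>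
    rw [Finset.sum_range_succ']
    simp only [Nat.cast_zero, zero_mul, add_zero, Nat.succ_sub_succ]
    push_cast
    have : ∀ i ∈ range (k+1),
        ((i:ℝ)+1) * ((k+1).choose (i+1) : ℝ) * p ^ (i+1) * (1-p) ^ (k-i)
        = ((k:ℝ)+1) * p * ((k.choose i : ℝ) * p ^ i * (1-p) ^ (k-i)) := by
      intro i _
      have h := Nat.add_one_mul_choose_eq k i
      have h' : ((k:ℝ)+1) * (k.choose i : ℝ) = ((k+1).choose (i+1) : ℝ) * ((i:ℝ)+1) := by
        exact_mod_cast congrArg (Nat.cast (R := ℝ)) h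
      rw [pow_succ]
      linear_combination (- (p ^ i * p * (1-p) ^ (k-i))) * h'
    calc ∑ i ∈ range (k+1), ((i:ℝ)+1) * ((k+1).choose (i+1) : ℝ) * p ^ (i+1) * (1-p) ^ (k-i)
        = ∑ i ∈ range (k+1), ((k:ℝ)+1) * p * ((k.choose i : ℝ) * p ^ i * (1-p) ^ (k-i)) :=
          sum_congr rfl this
      _ = ((k:ℝ)+1) * p * 1 := by rw [← mul_sum, L0]
      _ = ((k:ℝ)+1) * p := by ring

lemma L2 (m : ℕ) (p : ℝ) :
    ∑ x ∈ range (m+1), (x:ℝ) * ((x:ℝ)-1) * (m.choose x : ℝ) * p ^ x * (1-p) ^ (m-x)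
      = m * ((m:ℝ)-1) * p^2 := by
  induction m with
  | zero => simp
  | succ k _ =>
    rw [Finset.sum_range_succ']
    simp only [Nat.cast_zero, zero_mul, add_zero, Nat.succ_sub_succ]
    push_cast
    have : ∀ i ∈ range (k+1),
        ((i:ℝ)+1) * (((i:ℝ)+1)-1) * ((k+1).choose (i+1) : ℝ) * p ^ (i+1) * (1-p) ^ (k-i)
        = ((k:ℝ)+1) * p * ((i:ℝ) * (k.choose i : ℝ) * p ^ i * (1-p) ^ (k-i)) := by
      intro i _
      have h := Nat.add_one_mul_choose_eq k i
      have h' : ((k:ℝ)+1) * (k.choose i : ℝ) = ((k+1).choose (i+1) : ℝ) * ((i:ℝ)+1) := by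
        exact_mod_cast congrArg (Nat.cast (R := ℝ)) h
      rw [pow_succ]
      linear_combination (- ((i:ℝ) * p ^ i * p * (1-p) ^ (k-i))) * h'
    calc ∑ i ∈ range (k+1), ((i:ℝ)+1) * (((i:ℝ)+1)-1) * ((k+1).choose (i+1) : ℝ) * p ^ (i+1) * (1-p) ^ (k-i)
        = ∑ i ∈ range (k+1), ((k:ℝ)+1) * p * ((i:ℝ) * (k.choose i : ℝ) * p ^ i * (1-p) ^ (k-i)) :=
          sum_congr rfl this
      _ = ((k:ℝ)+1) * p * ((k:ℝ) * p) := by rw [← mul_sum, L1]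
      _ = ((k:ℝ)+1) * (((k:ℝ)+1)-1) * p^2 := by ring

theorem stmt_17
    (n : ℕ) (hn : 1 ≤ n) (lam : ℝ) (hlam : 0 < lam) (hlamn : lam < n)
    (q : ℕ → ℝ)
    (hq : ∀ x : ℕ, q x = (n.choose x : ℝ) * (lam / n) ^ x * (1 - lam / n) ^ (n - x)) :
    lam * ∑ x ∈ Finset.range (n + 1),
        q x * (((x : ℝ) + 1) * q (x + 1) / (lam * q x) - 1) ^ 2
      = lam ^ 2 / (n * (n - lam)) := by
  have hn0 : (0:ℝ) < n := by positivity
  have hnl : (0:ℝ) < (n:ℝ) - lam := by linarith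
  have hp0 : (0:ℝ) < lam / n := by positivity
  have hp1 : (0:ℝ) < 1 - lam / n := by
    rw [sub_pos, div_lt_one hn0]; exact hlamn
  -- Step 1: per-term simplification
  have step1 : ∀ x ∈ range (n+1),
      q x * (((x : ℝ) + 1) * q (x + 1) / (lam * q x) - 1) ^ 2
        = q x * ((lam - x)/((n:ℝ) - lam))^2 := by
    intro x hx
    rw [mem_range, Nat.lt_succ_iff] at hx
    rcases eq_or_lt_of_le hx with heq | hlt
    · subst heq
      have hzero : q (x+1) = 0 := by
        rw [hq]; simp [Nat.choose_succ_self]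
      rw [hzero]
      have : (lam - (x:ℝ))/((x:ℝ) - lam) = -1 := by
        rw [div_eq_iff hnl.ne']; ring
      rw [this]; ring
    · have hqx : 0 < q x := by
        rw [hq]
        have := Nat.choose_pos hx
        positivity
      have hc : ((n.choose (x+1) : ℝ)) * ((x:ℝ)+1) = (n.choose x : ℝ) * ((n:ℝ) - (x:ℝ)) := by
        have h := Nat.choose_succ_right_eq n x
        have : ((n.choose (x+1) * (x+1) : ℕ) : ℝ) = ((n.choose x * (n - x) : ℕ) : ℝ) := by
          exact_mod_cast congrArg (Nat.cast (R := ℝ)) h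
        push_cast [Nat.cast_sub hx] at this
        linarith [this]
      have key : ((x:ℝ)+1) * q (x+1) * (1 - lam/n) = ((n:ℝ) - x) * (lam/n) * q x := by
        rw [hq, hq]
        have he : n - x = (n - (x+1)) + 1 := by omega
        rw [he, pow_succ]
        linear_combination ((lam/n)^(x+1) * (1 - lam/n)^(n-(x+1)) * (1 - lam/n)) * hc
      have hne : (n:ℝ) ≠ 0 := hn0.ne'
      have key' : ((x:ℝ)+1) * q (x+1) * ((n:ℝ) - lam) = ((n:ℝ) - x) * lam * q x := by
        field_simp at key
        linear_combination key
      have hratio : ((x:ℝ)+1) * q (x+1) / (lam * q x) - 1 = (lam - x)/((n:ℝ) - lam) := by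
        have h2 : ((x:ℝ)+1) * q (x+1) / (lam * q x) = ((n:ℝ)-x)/((n:ℝ)-lam) := by
          rw [div_eq_div_iff (by positivity) hnl.ne']
          linear_combination key'
        rw [h2, div_sub_one hnl.ne']
        congr 1
        ring
      rw [hratio]
  rw [sum_congr rfl step1]
  -- Step 2: pull out denominator
  have step2 : ∑ x ∈ range (n+1), q x * ((lam - x)/((n:ℝ) - lam))^2
      = (∑ x ∈ range (n+1), q x * (lam - x)^2) / ((n:ℝ) - lam)^2 := by
    rw [sum_div]
    exact sum_congr rfl fun x _ => by rw [div_pow]; ring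
  rw [step2]
  -- Step 3: second moment
  have step3 : ∑ x ∈ range (n+1), q x * (lam - x)^2 = lam * ((n:ℝ) - lam) / n := by
    have expand : ∑ x ∈ range (n+1), q x * (lam - x)^2
        = ∑ x ∈ range (n+1),
            ((x:ℝ) * ((x:ℝ)-1) * (n.choose x : ℝ) * (lam/n) ^ x * (1-lam/n) ^ (n-x)
            + (1-2*lam) * ((x:ℝ) * (n.choose x : ℝ) * (lam/n) ^ x * (1-lam/n) ^ (n-x))
            + lam^2 * ((n.choose x : ℝ) * (lam/n) ^ x * (1-lam/n) ^ (n-x))) :=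
      sum_congr rfl fun x _ => by rw [hq]; ring
    rw [expand, sum_add_distrib, sum_add_distrib, ← mul_sum, ← mul_sum, L0, L1, L2]
    field_simp
    ring
  rw [step3]
  field_simp
end

section
/- Let 0 < q₀ < 1 and let P be the geometric density P(x) = (1−q₀)^x q₀ for x ∈ ℕ = {0,1,2,…}, with mean e₀ := (1−q₀)/q₀ > 0. Then the scaled Fisher information of P relative to Po(e₀) satisfies K1(Po(e₀),P) := e₀ Σ_{x≥0} P(x)((x+1)P(x+1)/(e₀ P(x)) − 1)² = (1−q₀)²/q₀. -/
theorem stmt_18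
    (q0 : ℝ) (h0 : 0 < q0) (h1 : q0 < 1)
    (P : ℕ → ℝ) (hP : ∀ x : ℕ, P x = (1 - q0) ^ x * q0)
    (e0 : ℝ) (he0 : e0 = (1 - q0) / q0) :
    e0 * ∑' x : ℕ, P x * (((x : ℝ) + 1) * P (x + 1) / (e0 * P x) - 1) ^ 2
      = (1 - q0) ^ 2 / q0 := by
  have hq : q0 ≠ 0 := ne_of_gt h0
  have hr0 : (0:ℝ) < 1 - q0 := by linarith
  have hrne : (1 - q0) ≠ 0 := ne_of_gt hr0
  have hrn : ‖(1 - q0 : ℝ)‖ < 1 := by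
    rw [Real.norm_eq_abs, abs_lt]; constructor <;> linarith
  have h2 : HasSum (fun n : ℕ ↦ ((n + 2).choose 2 : ℝ) * (1 - q0) ^ n)
      (1 / (1 - (1 - q0)) ^ 3) := hasSum_choose_mul_geometric_of_norm_lt_one 2 hrn
  have h1' : HasSum (fun n : ℕ ↦ ((n + 1).choose 1 : ℝ) * (1 - q0) ^ n)
      (1 / (1 - (1 - q0)) ^ 2) := hasSum_choose_mul_geometric_of_norm_lt_one 1 hrn
  have h0' : HasSum (fun n : ℕ ↦ (1 - q0) ^ n) (1 / (1 - (1 - q0))) := by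
    simpa using hasSum_geometric_of_norm_lt_one hrn
  have hcomb := ((h2.mul_left (q0 * (2 * q0 ^ 2))).sub
      (h1'.mul_left (q0 * (q0 ^ 2 + 2 * q0)))).add (h0'.mul_left q0)
  have hmain : HasSum (fun x : ℕ ↦ P x * (((x : ℝ) + 1) * P (x + 1) / (e0 * P x) - 1) ^ 2)
      (1 - q0) := by
    convert hcomb using 1
    · rfl
    · funext n
      have hpn : (1 - q0) ^ n ≠ 0 := pow_ne_zero _ hrne
      have hc2 : ((n + 2).choose 2 : ℝ) = ((n : ℝ) + 2) * ((n : ℝ) + 1) / 2 := by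
        rw [Nat.cast_choose_two]; push_cast; ring
      have hc1 : ((n + 1).choose 1 : ℝ) = (n : ℝ) + 1 := by
        rw [Nat.choose_one_right]; push_cast; ring
      rw [hP, hP, he0, hc2, hc1, pow_succ]
      field_simp
      ring
    · rw [sub_sub_cancel]
      field_simp
      ring
  rw [hmain.tsum_eq, he0]
  field_simp
end
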